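/- arXiv:1401.7588 — 9 statements merged into one kernel-verified Lean document; each statement's English description precedes it below -/
import Mathlib

section
/- Let α > 1 and ζ > 1 be real numbers and let M, N be positive integers. Then σ̲(Mα, Nζ) ≥ max( (σ̲(α,ζ)·log ζ − log N) / (log ζ + log N), 0 ) and σ̄(Mα, Nζ) ≥ max( (σ̄(α,ζ)·log ζ − log N) / (log ζ + log N), 0 ), where the inequalities are understood in the extended reals. -/
open Filter Polynomial

/-- Distance from a real number to the nearest integer. -/
noncomputable def nearestDist (x : ℝ) : ℝ := |x - round x|

open Classical in
/-- `σ_n(α,ζ) = -log‖αζⁿ‖/(n log ζ)`, valued in `(-∞,∞]`, with value `∞` when `αζⁿ ∈ ℤ`. -/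
noncomputable def sigmaFn (α ζ : ℝ) (n : ℕ) : EReal :=
  if ∃ m : ℤ, α * ζ ^ n = (m : ℝ) then ⊤
  else ((-(Real.log (nearestDist (α * ζ ^ n)) / (n * Real.log ζ)) : ℝ) : EReal)

/-- `σ̲(α,ζ) = liminf σ_n(α,ζ)`. -/
noncomputable def sigmaLower (α ζ : ℝ) : EReal := Filter.liminf (sigmaFn α ζ) Filter.atTop

/-- `σ̄(α,ζ) = limsup σ_n(α,ζ)`. -/
noncomputable def sigmaUpper (α ζ : ℝ) : EReal := Filter.limsup (sigmaFn α ζ) Filter.atTop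

/-- A Pisot number: a real algebraic integer `ζ > 1` all of whose conjugates other than `ζ`
itself have absolute value strictly less than 1. -/
def IsPisot (ζ : ℝ) : Prop :=
  1 < ζ ∧ IsIntegral ℤ ζ ∧
    ∀ z : ℂ, Polynomial.aeval z (minpoly ℚ ζ) = 0 → z ≠ (ζ : ℂ) → ‖z‖ < 1

/-- A Pisot unit: a Pisot number which is a unit in the ring of algebraic integers,
equivalently the constant coefficient of its monic minimal polynomial over `ℤ` is `±1`. -/
def IsPisotUnit (ζ : ℝ) : Prop :=
  IsPisot ζ ∧ ((minpoly ℤ ζ).coeff 0 = 1 ∨ (minpoly ℤ ζ).coeff 0 = -1)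

lemma nearestDist_le_int (x : ℝ) (m : ℤ) : nearestDist x ≤ |x - (m : ℝ)| := by
  by_cases h : m = round x
  · simp [nearestDist, h]
  · have h1 : (1:ℝ) ≤ |(m:ℝ) - (round x : ℝ)| := by
      have : (1:ℤ) ≤ |m - round x| := Int.one_le_abs (sub_ne_zero.mpr h)
      calc (1:ℝ) = ((1:ℤ):ℝ) := by norm_num
        _ ≤ (|m - round x| : ℤ) := by exact_mod_cast this
        _ = |(m:ℝ) - (round x : ℝ)| := by norm_cast
    have h2 : |(m:ℝ) - (round x:ℝ)| ≤ |(m:ℝ) - x| + |x - (round x:ℝ)| := abs_sub_le _ _ _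
    have h3 : |x - (round x:ℝ)| ≤ 1/2 := abs_sub_round x
    have h4 : |x - (m:ℝ)| = |(m:ℝ) - x| := abs_sub_comm _ _
    unfold nearestDist
    linarith

lemma nearestDist_nonneg (x : ℝ) : 0 ≤ nearestDist x := abs_nonneg _

lemma nearestDist_le_half (x : ℝ) : nearestDist x ≤ 1/2 := abs_sub_round x

lemma nearestDist_pos (x : ℝ) (h : ¬ ∃ m : ℤ, x = (m : ℝ)) : 0 < nearestDist x := by
  rcases lt_or_eq_of_le (nearestDist_nonneg x) with h1 | h1
  · exact h1
  · exfalso; apply h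
    have : x - round x = 0 := by
      have := h1.symm
      unfold nearestDist at this
      exact abs_eq_zero.mp this
    exact ⟨round x, by linarith⟩

lemma nearestDist_nat_mul (k : ℕ) (x : ℝ) : nearestDist ((k:ℝ) * x) ≤ (k:ℝ) * nearestDist x := by
  calc nearestDist ((k:ℝ) * x) ≤ |(k:ℝ) * x - ((k * round x : ℤ) : ℝ)| :=
        nearestDist_le_int _ _
    _ = |(k:ℝ) * (x - round x)| := by push_cast; ring_nf
    _ = (k:ℝ) * |x - round x| := by rw [abs_mul, Nat.abs_cast]
    _ = (k:ℝ) * nearestDist x := rfl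

lemma sigmaFn_nonneg (α ζ : ℝ) (hζ : 1 ≤ ζ) (n : ℕ) : 0 ≤ sigmaFn α ζ n := by
  unfold sigmaFn
  split
  · exact le_top
  · rw [← EReal.coe_zero, EReal.coe_le_coe_iff]
    have h1 : Real.log (nearestDist (α * ζ ^ n)) ≤ 0 :=
      Real.log_nonpos (nearestDist_nonneg _) (by linarith [nearestDist_le_half (α * ζ ^ n)])
    have h2 : 0 ≤ (n:ℝ) * Real.log ζ :=
      mul_nonneg (Nat.cast_nonneg n) (Real.log_nonneg hζ)
    have := div_nonpos_of_nonpos_of_nonneg h1 h2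
    linarith

/-- Pointwise key estimate. -/
lemma sigma_pointwise (α ζ : ℝ) (M N : ℕ) (hζ : 1 < ζ) (hM : 0 < M) (hN : 0 < N)
    (b t : ℝ) (n : ℕ) (hn1 : 1 ≤ n)
    (hbig : Real.log M < (n:ℝ) * (t * Real.log ζ - Real.log N - b * (Real.log ζ + Real.log N)))
    (h : (t : EReal) < sigmaFn α ζ n) :
    (b : EReal) < sigmaFn ((M:ℝ) * α) ((N:ℝ) * ζ) n := by
  classical
  set c := Real.log ζ with hc
  set d := Real.log N with hd
  have hcpos : 0 < c := Real.log_pos hζ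
  have hdnn : 0 ≤ d := Real.log_nonneg (by exact_mod_cast hN)
  have hnpos : (0:ℝ) < n := by exact_mod_cast hn1
  set x := α * ζ ^ n with hx
  have hKx : ((M:ℝ) * α) * ((N:ℝ) * ζ) ^ n = ((M * N ^ n : ℕ) : ℝ) * x := by
    push_cast; ring
  unfold sigmaFn
  split
  · exact EReal.coe_lt_top b
  · rename_i hnew
    -- new not integer; hence old not integer
    rw [hKx] at hnew
    have hold : ¬ ∃ m : ℤ, x = (m : ℝ) := by
      rintro ⟨m, hm⟩
      exact hnew ⟨(M * N ^ n : ℕ) * m, by push_cast [hm]; ring⟩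
    have hsig : sigmaFn α ζ n =
        ((-(Real.log (nearestDist x) / (n * c)) : ℝ) : EReal) := by
      unfold sigmaFn; rw [if_neg hold]
    rw [hsig, EReal.coe_lt_coe_iff] at h
    have hxpos : 0 < nearestDist x := nearestDist_pos x hold
    have hnc : (0:ℝ) < (n:ℝ) * c := mul_pos hnpos hcpos
    have hlogx : Real.log (nearestDist x) < -(t * ((n:ℝ) * c)) := by
      have h2 : Real.log (nearestDist x) / ((n:ℝ) * c) < -t := by linarith
      have := (div_lt_iff₀ hnc).mp h2
      nlinarith
    -- bound on nearestDist of the product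
    set K : ℕ := M * N ^ n with hK
    have hKpos : (0:ℝ) < (K:ℝ) := by positivity
    have hKxpos : 0 < nearestDist ((K:ℝ) * x) := by
      apply nearestDist_pos
      rw [← hKx]; exact fun hh => hnew (by rw [hKx] at hh; exact hh)
    have hub : nearestDist ((K:ℝ) * x) ≤ (K:ℝ) * nearestDist x := nearestDist_nat_mul K x
    have hlogK : Real.log (nearestDist ((K:ℝ) * x)) ≤ Real.log K + Real.log (nearestDist x) := by
      calc Real.log (nearestDist ((K:ℝ) * x)) ≤ Real.log ((K:ℝ) * nearestDist x) :=
            Real.log_le_log hKxpos hub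
        _ = Real.log K + Real.log (nearestDist x) :=
            Real.log_mul (ne_of_gt hKpos) (ne_of_gt hxpos)
    have hlogKval : Real.log (K:ℝ) = Real.log M + (n:ℝ) * d := by
      rw [hK]; push_cast
      rw [Real.log_mul (by positivity) (by positivity), Real.log_pow]
    have hlogNζ : Real.log ((N:ℝ) * ζ) = d + c := by
      rw [Real.log_mul (by positivity) (by linarith)]
    rw [EReal.coe_lt_coe_iff, hlogNζ]
    -- goal : b < -(log (nearestDist (Mα * (Nζ)^n)) / (n * (d+c)))
    have hrw : ((M:ℝ) * α) * ((N:ℝ) * ζ) ^ n = (K:ℝ) * x := by rw [hKx, hK]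
    rw [hrw]
    have hncd : (0:ℝ) < (n:ℝ) * (d + c) := by positivity
    have hfin : Real.log (nearestDist ((K:ℝ) * x)) < -(b * ((n:ℝ) * (d + c))) := by
      nlinarith [hlogK, hlogx, hbig]
    have : Real.log (nearestDist ((K:ℝ) * x)) / ((n:ℝ) * (d + c)) < -b :=
      (div_lt_iff₀ hncd).mpr (by nlinarith)
    linarith

lemma extract_t (L : EReal) (hL : 0 ≤ L) (b c d : ℝ) (hc : 0 < c) (hcd : 0 < c + d)
    (h : (b : EReal) < (L * (c : EReal) - (d : EReal)) / (((c + d : ℝ)) : EReal)) :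
    ∃ t : ℝ, (t : EReal) < L ∧ b * (c + d) < t * c - d := by
  by_cases hT : L = ⊤
  · refine ⟨(b * (c + d) + d) / c + 1, by rw [hT]; exact EReal.coe_lt_top _, ?_⟩
    have : ((b * (c + d) + d) / c + 1) * c = b * (c + d) + d + c := by
      field_simp
    nlinarith
  · have hB : L ≠ ⊥ := fun hbot => by rw [hbot] at hL; simp at hL
    set ℓ := L.toReal with hℓ
    have hLeq : L = ((ℓ : ℝ) : EReal) := (EReal.coe_toReal hT hB).symm
    rw [hLeq] at h
    have h' : b < (ℓ * c - d) / (c + d) := by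
      rw [← EReal.coe_mul, ← EReal.coe_sub, ← EReal.coe_div, EReal.coe_lt_coe_iff] at h
      exact h
    have h2 : b * (c + d) < ℓ * c - d := by
      have := (lt_div_iff₀ hcd).mp h'
      linarith
    have h3 : (b * (c + d) + d) / c < ℓ := by
      rw [div_lt_iff₀ hc]; nlinarith
    obtain ⟨t, ht1, ht2⟩ := exists_between h3
    refine ⟨t, by rw [hLeq]; exact_mod_cast ht2, ?_⟩
    rw [div_lt_iff₀ hc] at ht1
    nlinarith

lemma key_eventually (α ζ : ℝ) (M N : ℕ) (hζ : 1 < ζ) (hM : 0 < M) (hN : 0 < N) (b t : ℝ)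
    (htb : b * (Real.log ζ + Real.log N) < t * Real.log ζ - Real.log N) :
    ∀ᶠ n in atTop, ((t : EReal) < sigmaFn α ζ n →
      (b : EReal) < sigmaFn ((M:ℝ) * α) ((N:ℝ) * ζ) n) := by
  set δ := t * Real.log ζ - Real.log N - b * (Real.log ζ + Real.log N) with hδ
  have hδpos : 0 < δ := by rw [hδ]; linarith
  obtain ⟨n₀, hn₀⟩ := exists_nat_gt (Real.log M / δ)
  filter_upwards [eventually_ge_atTop (max 1 n₀)] with n hn ht
  have hn1 : 1 ≤ n := le_trans (le_max_left _ _) hn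
  have hnn : (n₀ : ℝ) ≤ n := by exact_mod_cast le_trans (le_max_right _ _) hn
  have hbig : Real.log M < (n:ℝ) * (t * Real.log ζ - Real.log N - b * (Real.log ζ + Real.log N)) := by
    have h1 : Real.log M < (n₀ : ℝ) * δ := by
      rw [div_lt_iff₀ hδpos] at hn₀; linarith
    have h2 : (n₀ : ℝ) * δ ≤ (n:ℝ) * δ := by nlinarith
    rw [← hδ]; linarith
  exact sigma_pointwise α ζ M N hζ hM hN b t n hn1 hbig ht

lemma Nζ_ge_one (ζ : ℝ) (N : ℕ) (hζ : 1 < ζ) (hN : 0 < N) : 1 ≤ (N:ℝ) * ζ := by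
  have h1 : (1:ℝ) ≤ (N:ℝ) := by exact_mod_cast hN
  nlinarith


/-- For real `α > 1`, `ζ > 1` and positive integers `M, N`,
`σ̲(Mα, Nζ) ≥ max((σ̲(α,ζ)·log ζ − log N)/(log ζ + log N), 0)` and similarly for `σ̄`,
as inequalities in the extended reals. -/
theorem sigma_lower_upper_mul_int (α ζ : ℝ) (M N : ℕ) (hα : 1 < α) (hζ : 1 < ζ)
    (hM : 0 < M) (hN : 0 < N) :
    sigmaLower ((M : ℝ) * α) ((N : ℝ) * ζ) ≥
      max ((sigmaLower α ζ * ((Real.log ζ : ℝ) : EReal) - ((Real.log N : ℝ) : EReal)) /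
        (((Real.log ζ + Real.log N : ℝ)) : EReal)) 0 ∧
    sigmaUpper ((M : ℝ) * α) ((N : ℝ) * ζ) ≥
      max ((sigmaUpper α ζ * ((Real.log ζ : ℝ) : EReal) - ((Real.log N : ℝ) : EReal)) /
        (((Real.log ζ + Real.log N : ℝ)) : EReal)) 0 := by
  have hc : 0 < Real.log ζ := Real.log_pos hζ
  have hdnn : 0 ≤ Real.log N := Real.log_nonneg (by exact_mod_cast hN)
  have hcd : 0 < Real.log ζ + Real.log N := by linarith
  have hnn' : ∀ n, (0:EReal) ≤ sigmaFn ((M:ℝ)*α) ((N:ℝ)*ζ) n :=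
    fun n => sigmaFn_nonneg _ _ (Nζ_ge_one ζ N hζ hN) n
  have hLnn : (0:EReal) ≤ sigmaLower α ζ := by
    refine le_liminf_of_le (by isBoundedDefault) ?_
    exact Eventually.of_forall (fun n => sigmaFn_nonneg α ζ (le_of_lt hζ) n)
  have hUnn : (0:EReal) ≤ sigmaUpper α ζ :=
    le_trans hLnn (liminf_le_limsup)
  have hlow0 : (0:EReal) ≤ sigmaLower ((M:ℝ)*α) ((N:ℝ)*ζ) := by
    refine le_liminf_of_le (by isBoundedDefault) ?_
    exact Eventually.of_forall hnn'
  have hup0 : (0:EReal) ≤ sigmaUpper ((M:ℝ)*α) ((N:ℝ)*ζ) :=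
    le_trans hlow0 liminf_le_limsup
  constructor
  · apply max_le _ hlow0
    apply le_of_forall_lt
    intro e he
    obtain ⟨b, heb, hbR⟩ := EReal.exists_between_coe_real he
    have hb : (b : EReal) ≤ sigmaLower ((M:ℝ)*α) ((N:ℝ)*ζ) := by
      obtain ⟨t, htL, htb⟩ := extract_t (sigmaLower α ζ) hLnn b _ _ hc hcd hbR
      have hev1 : ∀ᶠ n in atTop, (t:EReal) < sigmaFn α ζ n :=
        eventually_lt_of_lt_liminf htL
      refine le_liminf_of_le (by isBoundedDefault) ?_
      filter_upwards [hev1, key_eventually α ζ M N hζ hM hN b t htb] with n h1 h2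
      exact le_of_lt (h2 h1)
    exact lt_of_lt_of_le heb hb
  · apply max_le _ hup0
    apply le_of_forall_lt
    intro e he
    obtain ⟨b, heb, hbR⟩ := EReal.exists_between_coe_real he
    have hb : (b : EReal) ≤ sigmaUpper ((M:ℝ)*α) ((N:ℝ)*ζ) := by
      obtain ⟨t, htL, htb⟩ := extract_t (sigmaUpper α ζ) hUnn b _ _ hc hcd hbR
      have hfr : ∃ᶠ n in atTop, (t:EReal) < sigmaFn α ζ n :=
        frequently_lt_of_lt_limsup (by isBoundedDefault) htL
      refine le_limsup_of_frequently_le ?_ (by isBoundedDefault)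
      apply Frequently.mono (hfr.and_eventually (key_eventually α ζ M N hζ hM hN b t htb))
      rintro n ⟨h1, h2⟩
      exact le_of_lt (h2 h1)
    exact lt_of_lt_of_le heb hb
end

section
/- Let ζ be a Pisot number of degree k ≥ 2. Then 0 < σ̲(1,ζ) ≤ 1/(k−1), and σ̄(1,ζ) ≤ k−1. -/
open Filter Polynomial

lemma round_min (x : ℝ) (m : ℤ) : |x - round x| ≤ |x - (m:ℝ)| := by
  rcases le_or_gt (1/2) |x - (m:ℝ)| with h | h
  · exact (abs_sub_round x).trans h
  · have h2 := abs_sub_round x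
    have h3 : |(round x : ℝ) - (m:ℝ)| < 1 := by
      calc |(round x : ℝ) - (m:ℝ)| ≤ |(round x:ℝ) - x| + |x - (m:ℝ)| := abs_sub_le _ x _
        _ < 1 := by rw [abs_sub_comm] at h2; linarith
    have h4 : |round x - m| < 1 := by exact_mod_cast (by push_cast; exact h3 : |((round x - m : ℤ):ℝ)| < 1)
    have : round x = m := by have := abs_lt.mp h4; omega
    rw [this]

lemma round_eq_of_close (x : ℝ) (m : ℤ) (h : |x - (m:ℝ)| < 1/2) : round x = m := by
  have h2 := abs_sub_round x
  have h3 : |(round x : ℝ) - (m:ℝ)| < 1 := by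
    calc |(round x : ℝ) - (m:ℝ)| ≤ |(round x:ℝ) - x| + |x - (m:ℝ)| := abs_sub_le _ x _
      _ < 1 := by rw [abs_sub_comm] at h2; linarith
  have h4 : |round x - m| < 1 := by exact_mod_cast (by push_cast; exact h3 : |((round x - m : ℤ):ℝ)| < 1)
  have := abs_lt.mp h4; omega


set_option maxHeartbeats 1000000 in
open IntermediateField in
lemma pisot_core (ζ : ℝ) (k : ℕ) (h1 : 1 < ζ) (hint : IsIntegral ℤ ζ)
    (hconj : ∀ z : ℂ, Polynomial.aeval z (minpoly ℚ ζ) = 0 → z ≠ (ζ : ℂ) → ‖z‖ < 1)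
    (hk : 2 ≤ k) (hdeg : (minpoly ℚ ζ).natDegree = k) :
    ∃ (ν : Fin k → ℂ) (i₀ : Fin k),
      Function.Injective ν ∧ ν i₀ = (ζ : ℂ) ∧
      (∀ i, i ≠ i₀ → ‖ν i‖ < 1) ∧
      (∀ i, Polynomial.aeval (ν i) (minpoly ℚ ζ) = 0) ∧
      1 ≤ ‖∏ i, ν i‖ ∧
      (∀ n : ℕ, ∃ m : ℤ, ∑ i, ν i ^ n = (m : ℂ)) ∧
      (∀ (n : ℕ) (m : ℤ), (ζ : ℝ) ^ n ≠ (m : ℝ) →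
        1 ≤ ‖∏ i, (ν i ^ n - (m : ℂ))‖) := by
  have hζQ : IsIntegral ℚ ζ := hint.tower_top
  haveI : FiniteDimensional ℚ ℚ⟮ζ⟯ := adjoin.finiteDimensional hζQ
  set K := ℚ⟮ζ⟯
  let pb : PowerBasis ℚ K := adjoin.powerBasis hζQ
  set gen : K := AdjoinSimple.gen ℚ ζ with hgen
  have hpbgen : pb.gen = gen := adjoin.powerBasis_gen hζQ
  have hvalgen : (algebraMap K ℝ) gen = ζ := AdjoinSimple.algebraMap_gen ℚ ζ
  have hcard : Fintype.card (K →ₐ[ℚ] ℂ) = k := by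
    rw [AlgHom.card, adjoin.finrank hζQ, hdeg]
  let e : Fin k ≃ (K →ₐ[ℚ] ℂ) := (Fintype.equivFinOfCardEq hcard).symm
  let σ₀ : K →ₐ[ℚ] ℂ := (Complex.ofRealAm.restrictScalars ℚ).comp (IntermediateField.val K)
  have hσ₀ : σ₀ gen = (ζ : ℂ) := by
    simp only [σ₀, AlgHom.comp_apply, AlgHom.coe_restrictScalars', Complex.ofRealAm_coe]
    norm_cast
  have hinj : Function.Injective (fun σ : K →ₐ[ℚ] ℂ => σ gen) := by
    intro σ τ h
    exact pb.algHom_ext (by rw [hpbgen]; exact h)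
  have hnormfact : ∀ (n : ℕ) (m : ℤ), (ζ : ℝ) ^ n ≠ (m : ℝ) →
      1 ≤ ‖∏ i, (((e i) gen) ^ n - (m : ℂ))‖ := by
    intro n m hne
    have hgeni : IsIntegral ℤ gen := by
      rw [← isIntegral_algebraMap_iff (algebraMap K ℝ).injective, hvalgen]; exact hint
    have hx : IsIntegral ℤ (gen ^ n - (m : K)) := by
      refine (hgeni.pow n).sub ?_
      have : ((m : ℤ) : K) = algebraMap ℤ K m := by simp
      rw [this]; exact isIntegral_algebraMap
    have hx0 : gen ^ n - (m : K) ≠ 0 := by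
      intro h
      apply hne
      have := congrArg (algebraMap K ℝ) h
      rw [map_sub, map_pow, hvalgen, map_intCast, map_zero, sub_eq_zero] at this
      exact this
    have hnm : IsIntegral ℤ (Algebra.norm ℚ (gen ^ n - (m : K))) :=
      Algebra.isIntegral_norm ℚ hx
    obtain ⟨t, ht⟩ := IsIntegrallyClosed.isIntegral_iff.mp hnm
    have ht0 : t ≠ 0 := by
      intro h
      rw [h] at ht
      exact (Algebra.norm_ne_zero_iff.mpr hx0) (by exact_mod_cast ht.symm)
    have hprod : ∏ i, (((e i) gen) ^ n - (m : ℂ)) = algebraMap ℚ ℂ (Algebra.norm ℚ (gen ^ n - (m : K))) := by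
      rw [Algebra.norm_eq_prod_embeddings, ← e.prod_comp]
      congr 1; ext i; rw [map_sub, map_pow, map_intCast]
    rw [hprod, ← ht]
    rw [eq_intCast, map_intCast, Complex.norm_intCast]
    exact_mod_cast Int.one_le_abs ht0
  refine ⟨fun i => (e i) gen, e.symm σ₀, hinj.comp e.injective, ?_, ?_, ?_, ?_, ?_, ?_⟩
  · exact (congrArg (fun σ : _ →ₐ[ℚ] ℂ => σ gen) (e.apply_symm_apply σ₀)).trans hσ₀
  · intro i hi
    refine hconj _ ?_ ?_
    · rw [← minpoly_gen ℚ ζ, Polynomial.aeval_algHom_apply, ← hgen]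
      exact (congrArg (e i) (minpoly.aeval ℚ gen)).trans (map_zero _)
    · intro h
      simp only [] at h
      apply hi
      have : (e i) gen = (e (e.symm σ₀)) gen := by rw [Equiv.apply_symm_apply, hσ₀, h]
      exact e.injective (hinj this)
  · intro i
    rw [← minpoly_gen ℚ ζ, Polynomial.aeval_algHom_apply, ← hgen]
    exact (congrArg (e i) (minpoly.aeval ℚ gen)).trans (map_zero _)
  · have := hnormfact 1 0 (by
      intro h
      simp only [pow_one, Int.cast_zero] at h
      linarith)
    simpa using this
  · -- trace
    intro n
    have hgeni : IsIntegral ℤ gen := by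
      rw [← isIntegral_algebraMap_iff (algebraMap K ℝ).injective, hvalgen]; exact hint
    have htr : IsIntegral ℤ (Algebra.trace ℚ K (gen ^ n)) :=
      Algebra.isIntegral_trace (hgeni.pow n)
    obtain ⟨m, hm⟩ := IsIntegrallyClosed.isIntegral_iff.mp htr
    refine ⟨m, ?_⟩
    have := trace_eq_sum_embeddings (E := ℂ) (K := ℚ) (L := K) (x := gen ^ n)
    calc ∑ i, ((e i) gen) ^ n = ∑ i, (e i) (gen ^ n) := by simp [map_pow]
      _ = ∑ σ : K →ₐ[ℚ] ℂ, σ (gen ^ n) := e.sum_comp (fun σ => σ (gen ^ n))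
      _ = algebraMap ℚ ℂ (Algebra.trace ℚ K (gen ^ n)) := this.symm
      _ = (m : ℂ) := by rw [← hm, eq_intCast, map_intCast]
  exact hnormfact


open Matrix in
set_option maxHeartbeats 2000000 in
lemma hankel_contradiction (k : ℕ) (hk : 2 ≤ k) (ν : Fin k → ℂ)
    (hinj : Function.Injective ν) (ζ ρ : ℝ) (hζ : 1 < ζ) (i₀ : Fin k)
    (hν₀ : ν i₀ = (ζ : ℂ)) (hνle : ∀ i, ‖ν i‖ ≤ ζ)
    (hprodν : 1 ≤ ‖∏ i, ν i‖)
    (hρ : 0 < ρ) (hρ1 : ρ < 1) (hρζ : ζ * ρ ^ (k - 1) < 1)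
    (N : ℕ)
    (hs : ∀ m, N ≤ m → ‖∑ i ∈ Finset.univ.erase i₀, ν i ^ m‖ ≤ ρ ^ m) :
    False := by
  have hk0 : 0 < k := by omega
  have hζ0 : (0:ℝ) < ζ := by linarith
  set V : Matrix (Fin k) (Fin k) ℂ := Matrix.vandermonde ν with hV
  have hdetV : V.det ≠ 0 := by
    rw [hV, Matrix.det_vandermonde_ne_zero_iff]
    exact hinj
  set δ : ℝ := (‖V.det‖) ^ 2 with hδ
  have hδ0 : 0 < δ := pow_pos (norm_pos_iff.mpr hdetV) 2
  set s : ℕ → ℂ := fun m => ∑ i ∈ Finset.univ.erase i₀, ν i ^ m with hsdef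
  have hsum : ∀ m : ℕ, ∑ a, ν a ^ m = (ζ : ℂ) ^ m + s m := by
    intro m
    rw [hsdef, ← hν₀]
    exact (Finset.add_sum_erase _ _ (Finset.mem_univ i₀)).symm
  -- the key quantitative bound
  have key : ∀ n, N ≤ n →
      δ ≤ (k.factorial * (k * ζ ^ (2*k)) * (1+ζ)^(k-1)) * (ζ * ρ ^ (k-1)) ^ n := by
    intro n hn
    set A : Matrix (Fin k) (Fin k) ℂ := Matrix.of fun i j => ∑ a, ν a ^ (n + ↑i + ↑j) with hA
    have hAfact : A = Vᵀ * (Matrix.diagonal (fun a => ν a ^ n) * V) := by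
      ext i j
      simp only [hA, Matrix.of_apply, Matrix.mul_apply, Matrix.transpose_apply, hV,
        Matrix.vandermonde, Matrix.diagonal, Matrix.of_apply, Finset.mul_sum]
      rw [Finset.sum_comm]
      refine Finset.sum_congr rfl fun a _ => ?_
      rw [Finset.sum_eq_single a]
      · rw [if_pos rfl, ← pow_add, ← pow_add]
        congr 1
        omega
      · intro b _ hb; rw [if_neg hb]; ring
      · intro h; exact absurd (Finset.mem_univ a) h
    have hdetA : δ ≤ ‖A.det‖ := by
      rw [hAfact, Matrix.det_mul, Matrix.det_mul, Matrix.det_transpose, Matrix.det_diagonal]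
      rw [norm_mul, norm_mul]
      have h1 : (1:ℝ) ≤ ‖∏ a, ν a ^ n‖ := by
        have : ‖∏ a, ν a ^ n‖ = (‖∏ a, ν a‖)^n := by
          rw [Finset.prod_pow, norm_pow]
        rw [this]; exact one_le_pow₀ hprodν
      have h0 : (0:ℝ) ≤ ‖V.det‖ := norm_nonneg _
      nlinarith
    set L : Matrix (Fin k) (Fin k) ℂ :=
      Matrix.of (fun i j => if j = i then (1:ℂ) else if (j:ℕ)+1 = (i:ℕ) then (-ζ:ℂ) else 0)
      with hL
    have hdetL : L.det = 1 := by
      rw [Matrix.det_of_lowerTriangular]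
      · simp [hL]
      · intro i j hij
        have h1 : (i:ℕ) < (j:ℕ) := Fin.lt_def.mp hij
        simp only [hL, Matrix.of_apply]
        rw [if_neg (fun h => absurd (congrArg Fin.val h) (by omega)), if_neg (by omega)]
    set M : Matrix (Fin k) (Fin k) ℂ := L * A with hM
    have hdetM : δ ≤ ‖M.det‖ := by
      rw [hM, Matrix.det_mul, hdetL, one_mul]; exact hdetA
    -- row identities
    have hMapply : ∀ i j : Fin k, M i j = ∑ t, L i t * A t j := by
      intro i j
      rw [hM]
      exact Matrix.mul_apply
    have hM0 : ∀ j : Fin k, M ⟨0, hk0⟩ j = A ⟨0, hk0⟩ j := by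
      intro j
      rw [hMapply]
      rw [Finset.sum_eq_single (⟨0, hk0⟩ : Fin k)]
      · simp [hL]
      · intro t _ ht
        simp only [hL, Matrix.of_apply]
        rw [if_neg ht, if_neg (by simp)]
        ring
      · intro h; exact absurd (Finset.mem_univ _) h
    have hMi : ∀ (i j : Fin k) (hi : 0 < (i:ℕ)),
        M i j = A i j - (ζ:ℂ) * A ⟨(i:ℕ)-1, by omega⟩ j := by
      intro i j hi
      set i' : Fin k := ⟨(i:ℕ)-1, by omega⟩ with hi'
      have hii' : i' ≠ i := by
        intro h
        have := congrArg Fin.val h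
        simp only [hi'] at this
        omega
      rw [hMapply]
      have hc : (i':ℕ) + 1 = (i:ℕ) := by simp only [hi']; omega
      have hterm : ∀ t : Fin k, L i t * A t j =
          (if t = i then A i j else 0) + (if t = i' then -(ζ:ℂ) * A i' j else 0) := by
        intro t
        simp only [hL, Matrix.of_apply]
        by_cases h1 : t = i
        · subst h1
          simp [hii'.symm]
        · by_cases h2 : t = i'
          · simp [h2, hii', hc]
          · have h3 : ¬((t:ℕ) + 1 = (i:ℕ)) := by
              intro h
              exact h2 (Fin.ext (by omega))
            simp [h1, h2, h3]
      rw [Finset.sum_congr rfl (fun t _ => hterm t), Finset.sum_add_distrib,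
        Finset.sum_ite_eq' Finset.univ i (fun _ => A i j),
        Finset.sum_ite_eq' Finset.univ i' (fun _ => -(ζ:ℂ) * A i' j)]
      simp only [Finset.mem_univ, if_pos]
      ring
    -- entry bounds
    have habsA : ∀ i j : Fin k, ‖A i j‖ ≤ k * ζ ^ (2*k) * ζ ^ n := by
      intro i j
      rw [hA]
      simp only [Matrix.of_apply]
      refine (norm_sum_le _ _).trans ?_
      have hbd : ∀ a : Fin k, ‖ν a ^ (n + ↑i + ↑j)‖ ≤ ζ ^ (2*k) * ζ ^ n := by
        intro a
        rw [norm_pow]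
        calc ‖ν a‖ ^ (n + ↑i + ↑j) ≤ ζ ^ (n + ↑i + ↑j) :=
              pow_le_pow_left₀ (norm_nonneg _) (hνle a) _
          _ ≤ ζ ^ (n + 2*k) := pow_le_pow_right₀ hζ.le (by omega)
          _ = ζ ^ (2*k) * ζ ^ n := by rw [← pow_add]; ring_nf
      calc ∑ a : Fin k, ‖ν a ^ (n + ↑i + ↑j)‖ ≤ ∑ _a : Fin k, ζ ^ (2*k) * ζ ^ n :=
            Finset.sum_le_sum (fun a _ => hbd a)
        _ = k * ζ ^ (2*k) * ζ ^ n := by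
            rw [Finset.sum_const, Finset.card_univ, Fintype.card_fin, nsmul_eq_mul]; ring
    have hrow : ∀ (i j : Fin k), 0 < (i:ℕ) → ‖M i j‖ ≤ (1+ζ) * ρ ^ n := by
      intro i j hi
      rw [hMi i j hi]
      have e1 : A i j = (ζ:ℂ) ^ (n + ↑i + ↑j) + s (n + ↑i + ↑j) := by
        rw [hA]
        simp only [Matrix.of_apply]
        exact_mod_cast hsum _
      have e2 : A ⟨(i:ℕ)-1, by omega⟩ j = (ζ:ℂ) ^ (n + ((i:ℕ)-1) + ↑j) + s (n + ((i:ℕ)-1) + ↑j) := by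
        rw [hA]
        simp only [Matrix.of_apply]
        exact_mod_cast hsum _
      have hexp : n + ↑i + ↑j = (n + ((i:ℕ)-1) + ↑j) + 1 := by omega
      have hζpow : (ζ:ℂ) ^ (n + ↑i + ↑j) = (ζ:ℂ) * (ζ:ℂ) ^ (n + ((i:ℕ)-1) + ↑j) := by
        rw [hexp, pow_succ]; ring
      have : A i j - (ζ:ℂ) * A ⟨(i:ℕ)-1, by omega⟩ j
          = s (n + ↑i + ↑j) - (ζ:ℂ) * s (n + ((i:ℕ)-1) + ↑j) := by
        rw [e1, e2, hζpow]; ring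
      rw [this]
      have hb1 : ‖s (n + ↑i + ↑j)‖ ≤ ρ ^ n := by
        refine (hs _ (by omega)).trans ?_
        exact pow_le_pow_of_le_one hρ.le hρ1.le (by omega)
      have hb2 : ‖s (n + ((i:ℕ)-1) + ↑j)‖ ≤ ρ ^ n := by
        refine (hs _ (by omega)).trans ?_
        exact pow_le_pow_of_le_one hρ.le hρ1.le (by omega)
      calc ‖s (n + ↑i + ↑j) - (ζ:ℂ) * s (n + ((i:ℕ)-1) + ↑j)‖
          ≤ ‖s (n + ↑i + ↑j)‖ + ‖(ζ:ℂ) * s (n + ((i:ℕ)-1) + ↑j)‖ := by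
            rw [sub_eq_add_neg]
            refine (norm_add_le _ _).trans ?_
            rw [norm_neg]
        _ = ‖s (n + ↑i + ↑j)‖ + ζ * ‖s (n + ((i:ℕ)-1) + ↑j)‖ := by
            rw [norm_mul, Complex.norm_real, Real.norm_eq_abs, abs_of_pos hζ0]
        _ ≤ ρ ^ n + ζ * ρ ^ n := by
            have := mul_le_mul_of_nonneg_left hb2 hζ0.le
            linarith
        _ = (1+ζ) * ρ ^ n := by ring
    -- determinant upper bound
    have hdetMle : ‖M.det‖ ≤
        k.factorial * ((k * ζ ^ (2*k) * ζ ^ n) * ((1+ζ) * ρ ^ n)^(k-1)) := by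
      rw [Matrix.det_apply]
      refine (norm_sum_le _ _).trans ?_
      have hterm : ∀ π : Equiv.Perm (Fin k),
          ‖Equiv.Perm.sign π • ∏ i, M (π i) i‖
            ≤ (k * ζ ^ (2*k) * ζ ^ n) * ((1+ζ) * ρ ^ n)^(k-1) := by
        intro π
        have habs : ‖Equiv.Perm.sign π • ∏ i, M (π i) i‖
            = ‖∏ i, M (π i) i‖ := by
          rcases Int.units_eq_one_or (Equiv.Perm.sign π) with h | h <;> rw [h] <;> simp
        rw [habs, norm_prod]
        set z : Fin k := ⟨0, hk0⟩ with hz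
        set i₁ : Fin k := π.symm z with hi₁
        have hπ : π i₁ = z := Equiv.apply_symm_apply _ _
        rw [← Finset.mul_prod_erase Finset.univ _ (Finset.mem_univ i₁)]
        have h1 : ‖M (π i₁) i₁‖ ≤ k * ζ ^ (2*k) * ζ ^ n := by
          rw [hπ, hz, hM0]
          exact habsA _ _
        have h2 : ∏ i ∈ Finset.univ.erase i₁, ‖M (π i) i‖
            ≤ ((1+ζ) * ρ ^ n)^(k-1) := by
          have hcard : (Finset.univ.erase i₁).card = k - 1 := by
            rw [Finset.card_erase_of_mem (Finset.mem_univ _), Finset.card_univ, Fintype.card_fin]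
          calc ∏ i ∈ Finset.univ.erase i₁, ‖M (π i) i‖
              ≤ ∏ _i ∈ Finset.univ.erase i₁, ((1+ζ) * ρ ^ n) := by
                refine Finset.prod_le_prod (fun i _ => norm_nonneg _) (fun i hi => ?_)
                refine hrow (π i) i ?_
                have hne : π i ≠ z := by
                  intro h
                  exact (Finset.mem_erase.mp hi).1 (by rw [hi₁, ← h, Equiv.symm_apply_apply])
                have : (π i : ℕ) ≠ 0 := by
                  intro h
                  exact hne (Fin.ext (by simp [hz, h]))
                omega
            _ = ((1+ζ) * ρ ^ n)^(k-1) := by rw [Finset.prod_const, hcard]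
        refine mul_le_mul h1 h2 (Finset.prod_nonneg fun i _ => norm_nonneg _) ?_
        positivity
      calc ∑ π : Equiv.Perm (Fin k), ‖Equiv.Perm.sign π • ∏ i, M (π i) i‖
          ≤ (Finset.univ : Finset (Equiv.Perm (Fin k))).card •
              ((k * ζ ^ (2*k) * ζ ^ n) * ((1+ζ) * ρ ^ n)^(k-1)) :=
            Finset.sum_le_card_nsmul _ _ _ (fun π _ => hterm π)
        _ = k.factorial * ((k * ζ ^ (2*k) * ζ ^ n) * ((1+ζ) * ρ ^ n)^(k-1)) := by
            rw [Finset.card_univ, Fintype.card_perm, Fintype.card_fin, nsmul_eq_mul]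
    have hrearr : (k.factorial : ℝ) * ((k * ζ ^ (2*k) * ζ ^ n) * ((1+ζ) * ρ ^ n)^(k-1))
        = (k.factorial * (k * ζ ^ (2*k)) * (1+ζ)^(k-1)) * (ζ * ρ ^ (k-1)) ^ n := by
      rw [mul_pow, mul_pow, ← pow_mul, ← pow_mul, Nat.mul_comm n (k-1)]
      ring
    rw [← hrearr]
    exact hdetM.trans hdetMle
  -- tendsto contradiction
  have h0 : (0:ℝ) ≤ ζ * ρ ^ (k-1) := by positivity
  have htend : Tendsto (fun n : ℕ =>
      (k.factorial * (k * ζ ^ (2*k)) * (1+ζ)^(k-1)) * (ζ * ρ ^ (k-1)) ^ n) atTop (nhds 0) := by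
    have := tendsto_pow_atTop_nhds_zero_of_lt_one h0 hρζ
    simpa using this.const_mul (k.factorial * (k * ζ ^ (2*k)) * (1+ζ)^(k-1))
  have hev : ∀ᶠ n in atTop, (k.factorial * (k * ζ ^ (2*k)) * (1+ζ)^(k-1))
      * (ζ * ρ ^ (k-1)) ^ n < δ := htend.eventually_lt_const hδ0
  obtain ⟨n, hn, hlt⟩ := ((eventually_ge_atTop N).and hev).exists
  exact absurd (key n hn) (not_le.mpr hlt)

set_option maxHeartbeats 2000000 in
/-- For a Pisot number `ζ` of degree `k ≥ 2`:
`0 < σ̲(1,ζ) ≤ 1/(k−1)` and `σ̄(1,ζ) ≤ k−1`. -/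
theorem pisot_sigma_bounds (ζ : ℝ) (k : ℕ) (hP : IsPisot ζ) (hk : 2 ≤ k)
    (hdeg : (minpoly ℚ ζ).natDegree = k) :
    0 < sigmaLower 1 ζ ∧
    sigmaLower 1 ζ ≤ (((1 : ℝ) / ((k : ℝ) - 1)) : EReal) ∧
    sigmaUpper 1 ζ ≤ (((k : ℝ) - 1 : ℝ) : EReal) := by
  obtain ⟨hζ1, hint, hconj⟩ := hP
  obtain ⟨ν, i₀, hinj, hν₀, hνlt, hroots, hprodν, htr, hnorm⟩ :=
    pisot_core ζ k hζ1 hint hconj hk hdeg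
  have hζ0 : (0:ℝ) < ζ := by linarith
  have hlogζ : 0 < Real.log ζ := Real.log_pos hζ1
  have hk1 : (1:ℝ) ≤ (k:ℝ) - 1 := by
    have : (2:ℝ) ≤ (k:ℝ) := by exact_mod_cast hk
    linarith
  have hcastk : ((k-1:ℕ):ℝ) = (k:ℝ) - 1 := by
    have : 1 ≤ k := by omega
    push_cast [Nat.cast_sub this]
    ring
  have hν0 : ∀ i, ν i ≠ 0 := by
    intro i h
    rw [Finset.prod_eq_zero (Finset.mem_univ i) h] at hprodν
    simp only [norm_zero] at hprodν
    linarith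
  have hne : (Finset.univ.erase i₀).Nonempty := by
    rw [← Finset.card_pos, Finset.card_erase_of_mem (Finset.mem_univ _), Finset.card_univ,
      Fintype.card_fin]
    omega
  set θ : ℝ := (Finset.univ.erase i₀).sup' hne (fun i => ‖ν i‖) with hθdef
  obtain ⟨iw, hiw, hiwθ⟩ := Finset.exists_mem_eq_sup' hne (fun i => ‖ν i‖)
  have hθ0 : 0 < θ := by
    rw [hθdef, hiwθ]
    exact norm_pos_iff.mpr (hν0 iw)
  have hθ1 : θ < 1 := by
    rw [hθdef, hiwθ]
    exact hνlt iw (Finset.mem_erase.mp hiw).1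
  have hθle : ∀ i ∈ Finset.univ.erase i₀, ‖ν i‖ ≤ θ := by
    intro i hi
    rw [hθdef]
    exact Finset.le_sup' (fun i => ‖ν i‖) hi
  choose em hem using htr
  have hsplit : ∀ n, (ζ:ℂ)^n + (∑ i ∈ Finset.univ.erase i₀, ν i ^ n) = (em n : ℂ) := by
    intro n
    rw [← hem n, ← hν₀]
    exact Finset.add_sum_erase Finset.univ (fun i => ν i ^ n) (Finset.mem_univ i₀)
  have hsabs : ∀ n, ‖∑ i ∈ Finset.univ.erase i₀, ν i ^ n‖ ≤ ((k:ℝ) - 1) * θ ^ n := by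
    intro n
    refine (norm_sum_le _ _).trans ?_
    have h1 : ∀ i ∈ Finset.univ.erase i₀, ‖ν i ^ n‖ ≤ θ ^ n := by
      intro i hi
      rw [norm_pow]
      exact pow_le_pow_left₀ (norm_nonneg _) (hθle i hi) n
    refine (Finset.sum_le_sum h1).trans ?_
    rw [Finset.sum_const, Finset.card_erase_of_mem (Finset.mem_univ _), Finset.card_univ,
      Fintype.card_fin, nsmul_eq_mul, hcastk]
  have hsreal : ∀ n, (∑ i ∈ Finset.univ.erase i₀, ν i ^ n) = ((((em n : ℝ) - ζ^n : ℝ)) : ℂ) := by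
    intro n
    have h := hsplit n
    push_cast
    linear_combination h
  have habs_eq : ∀ n, ‖∑ i ∈ Finset.univ.erase i₀, ν i ^ n‖ = |ζ^n - (em n : ℝ)| := by
    intro n
    rw [hsreal n, Complex.norm_real, Real.norm_eq_abs, abs_sub_comm]
  have hnotint : ∀ n : ℕ, 1 ≤ n → ∀ m : ℤ, ζ ^ n ≠ (m:ℝ) := by
    intro n hn m h
    have hdvd : minpoly ℚ ζ ∣ (Polynomial.X^n - Polynomial.C (m:ℚ)) := by
      refine minpoly.dvd ℚ ζ ?_
      simp only [map_sub, map_pow, Polynomial.aeval_X, Polynomial.aeval_C]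
      rw [h]
      simp
    obtain ⟨i, hi⟩ := hne
    obtain ⟨q, hq⟩ := hdvd
    have hiroot : (ν i)^n = (m:ℂ) := by
      have h0 : Polynomial.aeval (ν i) (Polynomial.X^n - Polynomial.C (m:ℚ)) = 0 := by
        rw [hq, map_mul, hroots i, zero_mul]
      simp only [map_sub, map_pow, Polynomial.aeval_X, Polynomial.aeval_C, sub_eq_zero] at h0
      rw [h0]
      simp
    have h1 : ‖(ν i)^n‖ < 1 := by
      rw [norm_pow]
      exact pow_lt_one₀ (norm_nonneg _) (hνlt i (Finset.mem_erase.mp hi).1) (by omega)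
    rw [hiroot, Complex.norm_intCast] at h1
    have hm0 : m = 0 := by
      have h7 : |m| < 1 := by exact_mod_cast h1
      have := abs_lt.mp h7
      omega
    subst hm0
    rw [Int.cast_zero, pow_eq_zero_iff (by omega)] at hiroot
    exact hν0 i hiroot
  set d : ℕ → ℝ := fun n => nearestDist (ζ ^ n) with hd
  have hd_eq : ∀ n, d n = |ζ^n - round (ζ^n)| := fun n => rfl
  have hd_pos : ∀ n, 1 ≤ n → 0 < d n := by
    intro n hn
    rw [hd_eq]
    refine abs_pos.mpr fun h => hnotint n hn (round (ζ^n)) ?_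
    linarith [sub_eq_zero.mp h]
  have hσform : ∀ n, 1 ≤ n →
      sigmaFn 1 ζ n = ((-(Real.log (d n) / (n * Real.log ζ)) : ℝ) : EReal) := by
    intro n hn
    rw [sigmaFn, if_neg, one_mul]
    push_neg
    intro m
    rw [one_mul]
    exact hnotint n hn m
  have hdU : ∀ n, d n ≤ ((k:ℝ)-1) * θ^n := by
    intro n
    calc d n ≤ |ζ^n - (em n : ℝ)| := round_min _ _
      _ = ‖∑ i ∈ Finset.univ.erase i₀, ν i ^ n‖ := (habs_eq n).symm
      _ ≤ _ := hsabs n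
  have hζn1 : ∀ n : ℕ, (1:ℝ) ≤ ζ^n := fun n => one_le_pow₀ hζ1.le
  have hdL : ∀ n, 1 ≤ n → 1 ≤ d n * (3*ζ^n)^(k-1) := by
    intro n hn
    have hfact := hnorm n (round (ζ^n)) (hnotint n hn _)
    have hsplit2 : (∏ i, (ν i ^ n - ((round (ζ^n) : ℤ) : ℂ)))
        = (ν i₀ ^ n - ((round (ζ^n) : ℤ) : ℂ)) *
          ∏ i ∈ Finset.univ.erase i₀, (ν i ^ n - ((round (ζ^n) : ℤ) : ℂ)) :=
      (Finset.mul_prod_erase _ _ (Finset.mem_univ i₀)).symm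
    rw [hsplit2, norm_mul, norm_prod] at hfact
    have h0 : ‖ν i₀ ^ n - ((round (ζ^n) : ℤ) : ℂ)‖ = d n := by
      rw [hν₀, hd_eq]
      have : ((ζ:ℂ))^n - ((round (ζ^n) : ℤ) : ℂ) = (((ζ^n - (round (ζ^n)) : ℝ)) : ℂ) := by
        push_cast
        ring
      rw [this, Complex.norm_real, Real.norm_eq_abs]
    have hbd : ∀ i ∈ Finset.univ.erase i₀,
        ‖ν i ^ n - ((round (ζ^n) : ℤ) : ℂ)‖ ≤ 3*ζ^n := by
      intro i hi
      have h1 : ‖ν i ^ n‖ ≤ 1 := by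
        rw [norm_pow]
        exact pow_le_one₀ (norm_nonneg _) (hνlt i (Finset.mem_erase.mp hi).1).le
      have h2 : ‖((round (ζ^n) : ℤ) : ℂ)‖ ≤ ζ^n + 1/2 := by
        have hcc : (((round (ζ^n) : ℤ)) : ℂ) = (((round (ζ^n) : ℤ) : ℝ) : ℂ) := by push_cast; ring
        rw [hcc, Complex.norm_real, Real.norm_eq_abs]
        have h3 : |ζ^n - round (ζ^n)| ≤ 1/2 := abs_sub_round _
        have h4 : |(round (ζ^n) : ℝ)| ≤ |ζ^n| + |ζ^n - round (ζ^n)| := by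
          calc |(round (ζ^n) : ℝ)| = |ζ^n - (ζ^n - round (ζ^n))| := by congr 1; ring
            _ ≤ |ζ^n| + |ζ^n - round (ζ^n)| := abs_sub _ _
        rw [abs_of_pos (by positivity : (0:ℝ) < ζ^n)] at h4
        linarith
      calc ‖ν i ^ n - ((round (ζ^n) : ℤ) : ℂ)‖
          ≤ ‖ν i ^ n‖ + ‖((round (ζ^n) : ℤ) : ℂ)‖ := by
            rw [sub_eq_add_neg]
            refine (norm_add_le _ _).trans ?_
            rw [norm_neg]
        _ ≤ 1 + (ζ^n + 1/2) := by linarith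
        _ ≤ 3*ζ^n := by linarith [hζn1 n]
    have hprodbd : ∏ i ∈ Finset.univ.erase i₀, ‖ν i ^ n - ((round (ζ^n) : ℤ) : ℂ)‖
        ≤ (3*ζ^n)^(k-1) := by
      calc ∏ i ∈ Finset.univ.erase i₀, ‖ν i ^ n - ((round (ζ^n) : ℤ) : ℂ)‖
          ≤ ∏ _i ∈ Finset.univ.erase i₀, (3*ζ^n) :=
            Finset.prod_le_prod (fun i _ => norm_nonneg _) hbd
        _ = (3*ζ^n)^(k-1) := by
            rw [Finset.prod_const, Finset.card_erase_of_mem (Finset.mem_univ _),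
              Finset.card_univ, Fintype.card_fin]
    rw [h0] at hfact
    calc (1:ℝ) ≤ d n * ∏ i ∈ Finset.univ.erase i₀,
          ‖ν i ^ n - ((round (ζ^n) : ℤ) : ℂ)‖ := hfact
      _ ≤ d n * (3*ζ^n)^(k-1) := by
          refine mul_le_mul_of_nonneg_left hprodbd ?_
          rw [hd_eq]
          positivity
  -- GOAL 1
  have goal1 : 0 < sigmaLower 1 ζ := by
    set θ' : ℝ := Real.sqrt θ with hθ'def
    have hθ'0 : 0 < θ' := Real.sqrt_pos.mpr hθ0
    have hθ'1 : θ' < 1 := by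
      rw [hθ'def, show (1:ℝ) = Real.sqrt 1 by simp]
      exact Real.sqrt_lt_sqrt hθ0.le hθ1
    have hθθ' : θ < θ' := by
      nlinarith [Real.sq_sqrt hθ0.le]
    set c₀ : ℝ := -Real.log θ' / Real.log ζ with hc₀
    have hc₀0 : 0 < c₀ := div_pos (neg_pos.mpr (Real.log_neg hθ'0 hθ'1)) hlogζ
    have hrat : Tendsto (fun n : ℕ => ((k:ℝ)-1) * (θ/θ')^n) atTop (nhds 0) := by
      simpa using (tendsto_pow_atTop_nhds_zero_of_lt_one (by positivity)
        ((div_lt_one hθ'0).mpr hθθ')).const_mul ((k:ℝ)-1)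
    have hev : ∀ᶠ n in atTop, (c₀ : EReal) ≤ sigmaFn 1 ζ n := by
      filter_upwards [hrat.eventually_lt_const one_pos, eventually_ge_atTop 1] with n h1 hn
      have hp : (0:ℝ) < θ'^n := pow_pos hθ'0 n
      rw [div_pow, ← mul_div_assoc] at h1
      have h2 : ((k:ℝ)-1) * θ^n < θ'^n := (div_lt_one hp).mp h1
      have hdn : d n ≤ θ'^n := (hdU n).trans h2.le
      have h3 : Real.log (d n) ≤ n * Real.log θ' := by
        rw [← Real.log_pow]
        exact Real.log_le_log (hd_pos n hn) hdn
      rw [hσform n hn]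
      rw [EReal.coe_le_coe_iff]
      rw [hc₀, ← neg_div, div_le_div_iff₀ hlogζ (by positivity), neg_mul, neg_mul]
      have hn' : (1:ℝ) ≤ (n:ℝ) := by exact_mod_cast hn
      nlinarith [mul_le_mul_of_nonneg_right h3 hlogζ.le]
    calc (0:EReal) < (c₀ : EReal) := by exact_mod_cast hc₀0
      _ ≤ sigmaLower 1 ζ := Filter.le_liminf_of_le (by isBoundedDefault) hev
  -- GOAL 3
  have goal3 : sigmaUpper 1 ζ ≤ (((k : ℝ) - 1 : ℝ) : EReal) := by
    set C : ℝ := ((k:ℝ)-1) * Real.log 3 with hC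
    have hg : Tendsto (fun n : ℕ => ((k:ℝ)-1) + C / (n * Real.log ζ)) atTop
        (nhds ((k:ℝ)-1)) := by
      have h1 : Tendsto (fun n : ℕ => (n:ℝ) * Real.log ζ) atTop atTop :=
        (tendsto_natCast_atTop_atTop).atTop_mul_const hlogζ
      have h2 : Tendsto (fun n : ℕ => C / ((n:ℝ) * Real.log ζ)) atTop (nhds 0) :=
        h1.const_div_atTop C
      simpa using tendsto_const_nhds.add h2
    have hev : ∀ᶠ n in atTop,
        sigmaFn 1 ζ n ≤ ((((k:ℝ)-1) + C / (n * Real.log ζ) : ℝ) : EReal) := by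
      filter_upwards [eventually_ge_atTop 1] with n hn
      rw [hσform n hn, EReal.coe_le_coe_iff]
      have hd1 := hdL n hn
      have hdn0 : 0 < d n := hd_pos n hn
      have hlogkey : 0 ≤ Real.log (d n) + ((k:ℝ)-1) * (Real.log 3 + n * Real.log ζ) := by
        have h4 : 0 ≤ Real.log (d n * (3*ζ^n)^(k-1)) := Real.log_nonneg hd1
        rw [Real.log_mul hdn0.ne' (by positivity), Real.log_pow, Real.log_mul (by norm_num)
          (by positivity), Real.log_pow, hcastk] at h4
        linarith
      have hpos : (0:ℝ) < (n:ℝ) * Real.log ζ := by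
        have : (1:ℝ) ≤ (n:ℝ) := by exact_mod_cast hn
        positivity
      rw [← neg_div, div_le_iff₀ hpos]
      have hexp : (((k:ℝ)-1) + C / ((n:ℝ) * Real.log ζ)) * ((n:ℝ) * Real.log ζ)
          = ((k:ℝ)-1) * ((n:ℝ) * Real.log ζ) + C := by
        field_simp
      rw [hexp, hC]
      ring_nf
      ring_nf at hlogkey
      linarith
    refine le_trans (Filter.limsup_le_limsup hev) ?_
    rw [Filter.Tendsto.limsup_eq (EReal.tendsto_coe.mpr hg)]
  -- GOAL 2
  have goal2 : sigmaLower 1 ζ ≤ (((1:ℝ) / ((k:ℝ)-1)) : EReal) := by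
    by_contra hcon
    push_neg at hcon
    obtain ⟨b, hb1, hb2⟩ := EReal.exists_between_coe_real hcon
    have hb1' : (1:ℝ)/((k:ℝ)-1) < b := EReal.coe_lt_coe_iff.mp hb1
    have hb0 : 0 < b := lt_trans (div_pos one_pos (by linarith)) hb1'
    have hbk : 1 < b * ((k:ℝ)-1) := by
      rw [div_lt_iff₀ (by linarith : (0:ℝ) < (k:ℝ)-1)] at hb1'
      linarith
    set ρ : ℝ := Real.exp (-b * Real.log ζ) with hρdef
    have hρ0 : 0 < ρ := Real.exp_pos _
    have hρ1 : ρ < 1 := by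
      rw [hρdef, Real.exp_lt_one_iff]
      nlinarith
    have hρζ : ζ * ρ^(k-1) < 1 := by
      rw [hρdef, ← Real.exp_nat_mul]
      nth_rewrite 1 [← Real.exp_log hζ0]
      rw [← Real.exp_add, Real.exp_lt_one_iff, hcastk]
      nlinarith
    have hev1 := eventually_lt_of_lt_liminf hb2
    have hev2 : ∀ᶠ n : ℕ in atTop, ((k:ℝ)-1) * θ^n < 1/2 := by
      have := (tendsto_pow_atTop_nhds_zero_of_lt_one hθ0.le hθ1).const_mul ((k:ℝ)-1)
      simp only [mul_zero] at this
      exact this.eventually_lt_const (by norm_num)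
    obtain ⟨N, hN⟩ := eventually_atTop.mp ((hev1.and (hev2.and (eventually_ge_atTop 1))))
    refine hankel_contradiction k hk ν hinj ζ ρ hζ1 i₀ hν₀ ?_ hprodν hρ0 hρ1 hρζ N ?_
    · intro i
      by_cases h : i = i₀
      · rw [h, hν₀, Complex.norm_real, Real.norm_eq_abs, abs_of_pos hζ0]
      · exact (hνlt i h).le.trans (by linarith)
    · intro m hm
      obtain ⟨hσ, hhalf, h1m⟩ := hN m hm
      have hrnd : round (ζ^m) = em m := by
        refine round_eq_of_close _ _ ?_
        calc |ζ^m - ((em m : ℤ):ℝ)| = ‖∑ i ∈ Finset.univ.erase i₀, ν i ^ m‖ :=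
              (habs_eq m).symm
          _ ≤ ((k:ℝ)-1) * θ^m := hsabs m
          _ < 1/2 := hhalf
      rw [hσform m h1m] at hσ
      have hσ' : b < -(Real.log (d m) / (m * Real.log ζ)) := by exact_mod_cast hσ
      have hmpos : (0:ℝ) < (m:ℝ) * Real.log ζ := by
        have : (1:ℝ) ≤ (m:ℝ) := by exact_mod_cast h1m
        positivity
      have h5 : b * ((m:ℝ) * Real.log ζ) < -Real.log (d m) := by
        rw [← neg_div] at hσ'
        exact (lt_div_iff₀ hmpos).mp hσ'
      have h6 : Real.log (d m) < -(b * ((m:ℝ) * Real.log ζ)) := by linarith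
      have hdm : d m < ρ^m := by
        calc d m = Real.exp (Real.log (d m)) := (Real.exp_log (hd_pos m h1m)).symm
          _ < Real.exp (-(b * ((m:ℝ) * Real.log ζ))) := Real.exp_lt_exp.mpr h6
          _ = ρ^m := by rw [hρdef, ← Real.exp_nat_mul]; congr 1; ring
      calc ‖∑ i ∈ Finset.univ.erase i₀, ν i ^ m‖ = |ζ^m - ((em m : ℤ):ℝ)| :=
            habs_eq m
        _ = d m := by rw [hd_eq, hrnd]
        _ ≤ ρ^m := hdm.le
  exact ⟨goal1, goal2, goal3⟩
end

section
/- Let ζ be a Pisot number of degree k ≥ 2 with conjugates ζ₂, …, ζ_k, and let f := max_{2≤j≤k} |ζ_j| < 1. Then σ̲(1,ζ) ≤ −log f / log ζ. -/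
open Filter Polynomial
open scoped IntermediateField

lemma round_eq_of_abs_sub_lt_half {x : ℝ} {m : ℤ} (h : |x - m| < 1/2) : round x = m := by
  rw [round_eq, Int.floor_eq_iff]
  obtain ⟨h1, h2⟩ := abs_lt.mp h
  constructor <;> push_cast <;> linarith

lemma vandermonde_key {m : ℕ} (lam : Fin m → ℂ) (hinj : Function.Injective lam)
    (i₀ : Fin m) (h0 : lam i₀ ≠ 0) :
    ∃ C : ℝ, 0 < C ∧ ∀ n : ℕ, ∃ j : Fin m,
      ‖lam i₀‖ ^ n ≤ C * ‖∑ i, lam i ^ (n + (j : ℕ))‖ := by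
  classical
  set V : Matrix (Fin m) (Fin m) ℂ := (Matrix.vandermonde lam).transpose with hV
  have hdet : IsUnit V.det := by
    rw [Matrix.det_transpose]
    exact (Matrix.det_vandermonde_ne_zero_iff.mpr hinj).isUnit
  set B := V⁻¹ with hB
  have key : ∀ n : ℕ, (fun j : Fin m => lam j ^ n)
      = B.mulVec (fun i : Fin m => ∑ t, lam t ^ (n + (i : ℕ))) := by
    intro n
    have h1 : V.mulVec (fun j => lam j ^ n) = fun i : Fin m => ∑ t, lam t ^ (n + (i : ℕ)) := by
      funext i
      simp only [Matrix.mulVec, dotProduct, hV, Matrix.transpose_apply,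
        Matrix.vandermonde_apply]
      refine Finset.sum_congr rfl fun t _ => ?_
      rw [pow_add, mul_comm]
    rw [← h1, Matrix.mulVec_mulVec, Matrix.nonsing_inv_mul _ hdet, Matrix.one_mulVec]
  set D : ℝ := (∑ j, ‖B i₀ j‖) + 1 with hD
  have hDpos : 0 < D := by
    have : 0 ≤ ∑ j, ‖B i₀ j‖ :=
      Finset.sum_nonneg fun j _ => norm_nonneg _
    linarith
  have hBD : ∀ j, ‖B i₀ j‖ ≤ D := by
    intro j
    have h1 : ‖B i₀ j‖ ≤ ∑ i, ‖B i₀ i‖ :=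
      Finset.single_le_sum (f := fun i => ‖B i₀ i‖)
        (fun i _ => norm_nonneg _) (Finset.mem_univ j)
    linarith
  have hm0 : (0:ℝ) < m := by
    have : 0 < m := Fin.pos i₀
    exact_mod_cast this
  refine ⟨m * D, by positivity, fun n => ?_⟩
  by_contra hcon
  push_neg at hcon
  have ht : (0:ℝ) < ‖lam i₀‖ ^ n := pow_pos (norm_pos_iff.mpr h0) n
  set t : ℝ := ‖lam i₀‖ ^ n with htdef
  have hexp : lam i₀ ^ n = ∑ j, B i₀ j * (∑ i, lam i ^ (n + (j : ℕ))) := by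
    have := congrFun (key n) i₀
    simpa [Matrix.mulVec, dotProduct] using this
  have hle : t ≤ ∑ j, ‖B i₀ j‖ * ‖∑ i, lam i ^ (n + (j : ℕ))‖ := by
    calc t = ‖lam i₀ ^ n‖ := by rw [norm_pow]
      _ = ‖∑ j, B i₀ j * (∑ i, lam i ^ (n + (j : ℕ)))‖ := by rw [hexp]
      _ ≤ ∑ j, ‖B i₀ j * (∑ i, lam i ^ (n + (j : ℕ)))‖ :=
          norm_sum_le _ _
      _ = _ := by simp [norm_mul]
  have hlt : ∀ j ∈ Finset.univ, ‖B i₀ j‖ * ‖∑ i, lam i ^ (n + (j : ℕ))‖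
      < D * (t / (m * D)) := by
    intro j _
    have h2 : (m : ℝ) * D * ‖∑ i, lam i ^ (n + (j : ℕ))‖ < t := hcon j
    have habs : ‖∑ i, lam i ^ (n + (j : ℕ))‖ < t / (m * D) := by
      rw [lt_div_iff₀ (by positivity)]
      linarith [h2]
    calc ‖B i₀ j‖ * ‖∑ i, lam i ^ (n + (j : ℕ))‖
        ≤ D * ‖∑ i, lam i ^ (n + (j : ℕ))‖ :=
          mul_le_mul_of_nonneg_right (hBD j) (norm_nonneg _)
      _ < D * (t / (m * D)) := mul_lt_mul_of_pos_left habs hDpos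
  have hsum : ∑ j : Fin m, ‖B i₀ j‖ * ‖∑ i, lam i ^ (n + (j : ℕ))‖ < t := by
    calc (∑ j : Fin m, ‖B i₀ j‖ * ‖∑ i, lam i ^ (n + (j : ℕ))‖)
        < ∑ _j : Fin m, D * (t / (m * D)) :=
          Finset.sum_lt_sum_of_nonempty ⟨i₀, Finset.mem_univ i₀⟩ hlt
      _ = m * (D * (t / (m * D))) := by
          rw [Finset.sum_const, Finset.card_univ, Fintype.card_fin, nsmul_eq_mul]
      _ = t := by field_simp
  linarith

set_option maxHeartbeats 2000000 in
set_option synthInstance.maxHeartbeats 400000 in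
theorem pisot_sigmaLower_le_conj (ζ : ℝ) (k : ℕ) (f : ℝ) (hP : IsPisot ζ) (hk : 2 ≤ k)
    (hdeg : (minpoly ℚ ζ).natDegree = k)
    (hub : ∀ z : ℂ, Polynomial.aeval z (minpoly ℚ ζ) = 0 → z ≠ (ζ : ℂ) → ‖z‖ ≤ f)
    (hattained : ∃ z : ℂ, Polynomial.aeval z (minpoly ℚ ζ) = 0 ∧ z ≠ (ζ : ℂ) ∧
      ‖z‖ = f) :
    sigmaLower 1 ζ ≤ ((-(Real.log f) / Real.log ζ : ℝ) : EReal) := by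
  classical
  obtain ⟨hζ1, hint, hconj⟩ := hP
  obtain ⟨z, hz_root, hz_ne, hz_abs⟩ := hattained
  have hζ0 : (0:ℝ) < ζ := lt_trans one_pos hζ1
  have hlogζ : 0 < Real.log ζ := Real.log_pos hζ1
  have hQint : IsIntegral ℚ ζ := hint.tower_top
  have hf1 : f < 1 := by rw [← hz_abs]; exact hconj z hz_root hz_ne
  -- the field ℚ(ζ)
  haveI : FiniteDimensional ℚ ℚ⟮ζ⟯ := IntermediateField.adjoin.finiteDimensional hQint
  set α : ℚ⟮ζ⟯ := IntermediateField.AdjoinSimple.gen ℚ ζ with hα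
  have hαζ : (algebraMap ℚ⟮ζ⟯ ℝ) α = ζ := IntermediateField.AdjoinSimple.algebraMap_gen ℚ ζ
  have hmin : minpoly ℚ α = minpoly ℚ ζ := IntermediateField.minpoly_gen ℚ ζ
  -- the real embedding σ₀
  set σ₀ : ℚ⟮ζ⟯ →ₐ[ℚ] ℂ := (Complex.ofRealHom.comp (algebraMap ℚ⟮ζ⟯ ℝ)).toRatAlgHom with hσ₀def
  have hσ₀ : σ₀ α = (ζ : ℂ) := by
    show Complex.ofRealHom (algebraMap ℚ⟮ζ⟯ ℝ α) = (ζ : ℂ)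
    rw [hαζ]; rfl
  -- values of embeddings are roots of the minimal polynomial
  have hroot : ∀ σ : ℚ⟮ζ⟯ →ₐ[ℚ] ℂ, aeval (σ α) (minpoly ℚ ζ) = 0 := fun σ => by
    rw [← hmin, Polynomial.aeval_algHom_apply, minpoly.aeval, map_zero]
  -- injectivity of σ ↦ σ α
  have hinj : Function.Injective (fun σ : ℚ⟮ζ⟯ →ₐ[ℚ] ℂ => σ α) := by
    intro σ τ h
    apply IntermediateField.adjoin_algHom_ext ℚ
    intro x hx
    have hxζ : x = ζ := hx
    subst hxζ
    exact h
  have hne_val : ∀ σ : ℚ⟮ζ⟯ →ₐ[ℚ] ℂ, σ ≠ σ₀ → σ α ≠ (ζ:ℂ) := fun σ hσ h =>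
    hσ (hinj (h.trans hσ₀.symm))
  have hub' : ∀ σ : ℚ⟮ζ⟯ →ₐ[ℚ] ℂ, σ ≠ σ₀ → ‖σ α‖ ≤ f := fun σ hσ =>
    hub _ (hroot σ) (hne_val σ hσ)
  -- the embedding σ₁ attaining f
  set pb := IntermediateField.adjoin.powerBasis hQint with hpb
  have hpbgen : pb.gen = α := IntermediateField.adjoin.powerBasis_gen hQint
  have hz_root' : aeval z (minpoly ℚ pb.gen) = 0 := by rw [hpbgen, hmin]; exact hz_root
  set σ₁ : ℚ⟮ζ⟯ →ₐ[ℚ] ℂ := pb.lift z hz_root' with hσ₁def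
  have hσ₁ : σ₁ α = z := by rw [← hpbgen]; exact pb.lift_gen z hz_root'
  have hσ₁ne : σ₁ ≠ σ₀ := fun h => hz_ne (by rw [← hσ₁, h, hσ₀])
  -- trace integers
  have hαint : IsIntegral ℤ α := by
    rwa [← isIntegral_algebraMap_iff (algebraMap ℚ⟮ζ⟯ ℝ).injective, hαζ]
  have htr : ∀ n : ℕ, ∃ T : ℤ, (T : ℚ) = Algebra.trace ℚ ℚ⟮ζ⟯ (α ^ n) := by
    intro n
    have hI : IsIntegral ℤ (Algebra.trace ℚ ℚ⟮ζ⟯ (α ^ n)) :=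
      Algebra.isIntegral_trace (hαint.pow n)
    obtain ⟨T, hT⟩ := IsIntegrallyClosed.isIntegral_iff.mp hI
    exact ⟨T, by rw [← hT]; simp⟩
  choose T hT using htr
  have hsum : ∀ n : ℕ, ((T n : ℂ)) = ∑ σ : ℚ⟮ζ⟯ →ₐ[ℚ] ℂ, (σ α) ^ n := by
    intro n
    have h1 := trace_eq_sum_embeddings (E := ℂ) (K := ℚ) (L := ℚ⟮ζ⟯) (x := α ^ n)
    rw [← hT n] at h1
    simpa [map_pow] using h1
  -- indexing the other embeddings
  set m' := Fintype.card {σ : ℚ⟮ζ⟯ →ₐ[ℚ] ℂ // σ ≠ σ₀} with hm'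
  set e : Fin m' ≃ {σ : ℚ⟮ζ⟯ →ₐ[ℚ] ℂ // σ ≠ σ₀} := (Fintype.equivFin _).symm with he
  set lam : Fin m' → ℂ := fun j => (e j).1 α with hlam
  have hlaminj : Function.Injective lam := fun a b h =>
    e.injective (Subtype.ext (hinj h))
  have hlam_ub : ∀ j, ‖lam j‖ ≤ f := fun j => hub' _ (e j).2
  set i₀ : Fin m' := e.symm ⟨σ₁, hσ₁ne⟩ with hi₀
  have hlam_i₀ : lam i₀ = z := by
    rw [hlam]
    show ((e (e.symm ⟨σ₁, hσ₁ne⟩)).1) α = z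
    rw [e.apply_symm_apply]
    exact hσ₁
  have hα0 : α ≠ 0 := by
    intro h
    rw [h, map_zero] at hαζ
    exact hζ0.ne hαζ
  have hlam0 : ∀ j, lam j ≠ 0 := by
    intro j h
    exact hα0 ((e j).1.toRingHom.injective (by rwa [RingHom.map_zero]))
  have hf0 : 0 < f := by
    rw [← hz_abs]
    exact norm_pos_iff.mpr (hlam_i₀ ▸ hlam0 i₀)
  obtain ⟨C, hC0, hCkey⟩ := vandermonde_key lam hlaminj i₀ (hlam0 i₀)
  have habs_i₀ : ‖lam i₀‖ = f := by rw [hlam_i₀, hz_abs]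
  -- splitting the trace
  have hSc : ∀ l : ℕ, (T l : ℂ) = (ζ:ℂ) ^ l + ∑ j, lam j ^ l := by
    intro l
    rw [hsum l]
    have h2a : ∑ j, lam j ^ l = ∑ s : {σ : ℚ⟮ζ⟯ →ₐ[ℚ] ℂ // σ ≠ σ₀}, (s.1 α) ^ l :=
      Fintype.sum_equiv e (fun j => lam j ^ l) (fun s => (s.1 α) ^ l) (fun j => rfl)
    have h2b : ∑ σ ∈ Finset.univ.erase σ₀, (σ α) ^ l
        = ∑ s : {σ : ℚ⟮ζ⟯ →ₐ[ℚ] ℂ // σ ≠ σ₀}, (s.1 α) ^ l :=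
      Finset.sum_subtype _ (fun x => by simp) _
    rw [h2a, ← h2b, ← hσ₀, add_comm, Finset.sum_erase_add _ _ (Finset.mem_univ σ₀)]
  have hSc_ub : ∀ l : ℕ, ‖∑ j, lam j ^ l‖ ≤ (m' : ℝ) * f ^ l := by
    intro l
    calc ‖∑ j, lam j ^ l‖ ≤ ∑ j, ‖lam j ^ l‖ :=
          norm_sum_le _ _
      _ ≤ ∑ _j : Fin m', f ^ l := Finset.sum_le_sum fun j _ => by
          rw [norm_pow]
          exact pow_le_pow_left₀ (norm_nonneg _) (hlam_ub j) l
      _ = m' * f ^ l := by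
          rw [Finset.sum_const, Finset.card_univ, Fintype.card_fin, nsmul_eq_mul]
  have hdist : ∀ l : ℕ, |ζ ^ l - (T l : ℝ)| = ‖∑ j, lam j ^ l‖ := by
    intro l
    have h1 : ((ζ ^ l - (T l : ℝ) : ℝ) : ℂ) = -(∑ j, lam j ^ l) := by
      push_cast
      rw [hSc l]
      ring
    rw [← Real.norm_eq_abs, ← Complex.norm_real, h1, norm_neg]
  -- the limit argument
  set c : ℝ := -Real.log f / Real.log ζ with hc
  have main : ∀ d : ℝ, c < d → sigmaLower 1 ζ ≤ (d : EReal) := by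
    intro d hd
    rw [sigmaLower]
    apply Filter.liminf_le_of_frequently_le'
    have hev1 : ∀ᶠ l : ℕ in atTop, (m' : ℝ) * f ^ l < 1/2 := by
      have h1 : Filter.Tendsto (fun l : ℕ => (m' : ℝ) * f ^ l) atTop (nhds 0) := by
        simpa using (tendsto_pow_atTop_nhds_zero_of_lt_one hf0.le hf1).const_mul (m' : ℝ)
      exact h1.eventually_lt_const (by norm_num)
    have hev2 : ∀ᶠ l : ℕ in atTop, Real.log C / (l * Real.log ζ) ≤ d - c := by
      have h1 : Filter.Tendsto (fun l : ℕ => Real.log C / (l * Real.log ζ)) atTop (nhds 0) := by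
        apply Filter.Tendsto.div_atTop tendsto_const_nhds
        exact (tendsto_natCast_atTop_atTop).atTop_mul_const hlogζ
      exact h1.eventually_le_const (by linarith)
    have hev3 : ∀ᶠ l : ℕ in atTop, 1 ≤ l := Filter.eventually_ge_atTop 1
    have hfreq : ∃ᶠ l : ℕ in atTop, f ^ l ≤ C * ‖∑ j, lam j ^ l‖ := by
      rw [Filter.frequently_atTop]
      intro N
      obtain ⟨j, hj⟩ := hCkey N
      refine ⟨N + j, Nat.le_add_right _ _, ?_⟩
      calc f ^ (N + (j:ℕ)) ≤ f ^ N :=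
            pow_le_pow_of_le_one hf0.le hf1.le (Nat.le_add_right _ _)
        _ ≤ C * ‖∑ i, lam i ^ (N + (j:ℕ))‖ := by rwa [habs_i₀] at hj
    refine ((hfreq.and_eventually (hev1.and (hev2.and hev3))).mono ?_)
    rintro l ⟨hPl, hsmall, hlogCb, hl1⟩
    set a : ℝ := ‖∑ j, lam j ^ l‖ with ha
    have ha_lb : f ^ l / C ≤ a := (div_le_iff₀ hC0).mpr (by linarith [hPl])
    have ha_pos : 0 < a := lt_of_lt_of_le (by positivity) ha_lb
    have ha_ub : a < 1/2 := lt_of_le_of_lt (hSc_ub l) hsmall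
    have hd_eq : |ζ ^ l - (T l : ℝ)| = a := hdist l
    have hnotint : ¬ ∃ q : ℤ, (1:ℝ) * ζ ^ l = (q : ℝ) := by
      rintro ⟨q, hq⟩
      rw [one_mul] at hq
      have h1 : |((q - T l : ℤ) : ℝ)| = a := by
        push_cast
        rw [← hq]
        exact hd_eq
      have h2 : q - T l ≠ 0 := by
        intro h
        rw [h] at h1
        simp at h1
        exact ha_pos.ne h1
      have h3 : (1:ℝ) ≤ |((q - T l : ℤ) : ℝ)| := by
        rw [← Int.cast_abs]
        exact_mod_cast Int.one_le_abs h2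
      linarith
    have hround : round (ζ ^ l) = T l :=
      round_eq_of_abs_sub_lt_half (by rw [hd_eq]; linarith)
    have hnd : nearestDist ((1:ℝ) * ζ ^ l) = a := by
      rw [one_mul, nearestDist, hround, hd_eq]
    have hsig : sigmaFn 1 ζ l = ((-(Real.log a / (l * Real.log ζ)) : ℝ) : EReal) := by
      rw [sigmaFn, if_neg hnotint, hnd]
    rw [hsig, EReal.coe_le_coe_iff]
    have hl0 : (0:ℝ) < l := by exact_mod_cast hl1
    have hllog : 0 < (l:ℝ) * Real.log ζ := mul_pos hl0 hlogζ
    have hloga : (l:ℝ) * Real.log f - Real.log C ≤ Real.log a := by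
      have h1 := Real.log_le_log (by positivity) ha_lb
      rwa [Real.log_div (by positivity) hC0.ne', Real.log_pow] at h1
    have h2 : -(Real.log a / ((l:ℝ) * Real.log ζ))
        = (-Real.log a) / ((l:ℝ) * Real.log ζ) := by ring
    rw [h2]
    calc (-Real.log a) / ((l:ℝ) * Real.log ζ)
        ≤ ((l:ℝ) * (-Real.log f) + Real.log C) / ((l:ℝ) * Real.log ζ) := by
          gcongr
          linarith
      _ = (-Real.log f) / Real.log ζ + Real.log C / ((l:ℝ) * Real.log ζ) := by
          rw [add_div, mul_div_mul_left _ _ hl0.ne']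
      _ ≤ c + (d - c) := by
          rw [hc]
          exact add_le_add (le_of_eq (by rw [neg_div])) hlogCb
      _ = d := by ring
  by_contra hcon'
  push_neg at hcon'
  obtain ⟨x, hx1, hx2⟩ := EReal.lt_iff_exists_real_btwn.mp hcon'
  have hle := main x (by exact_mod_cast hx1)
  exact absurd hx2 (not_lt.mpr hle)
end

section
/- Let ζ be a Pisot number of degree 2. Then σ̲(1,ζ) = σ̄(1,ζ) = 1 if and only if ζ is a Pisot unit. -/
open Filter Polynomial

/-- The integer sequence `ζ^n + η^n` for the two roots of `X² + bX + c`. -/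
private def auxseq (b c : ℤ) : ℕ → ℤ
  | 0 => 2
  | 1 => -b
  | n + 2 => -b * auxseq b c (n + 1) - c * auxseq b c n

private lemma auxseq_spec (b c : ℤ) (x y : ℝ) (hxy : x + y = -(b : ℝ))
    (hx : x ^ 2 = -(b : ℝ) * x - c) (hy : y ^ 2 = -(b : ℝ) * y - c) :
    ∀ n : ℕ, (auxseq b c n : ℝ) = x ^ n + y ^ n := by
  intro n
  induction n using Nat.strong_induction_on with
  | _ n ih =>
    match n with
    | 0 => norm_num [auxseq]
    | 1 => show ((-b : ℤ) : ℝ) = x ^ 1 + y ^ 1; push_cast; simp; linarith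
    | (m + 2) =>
      have h1 := ih (m + 1) (by omega)
      have h0 := ih m (by omega)
      show ((-b * auxseq b c (m + 1) - c * auxseq b c m : ℤ) : ℝ) = _
      push_cast
      rw [h1, h0]
      have ex : x ^ (m + 2) = (-(b : ℝ) * x - c) * x ^ m := by rw [← hx]; ring
      have ey : y ^ (m + 2) = (-(b : ℝ) * y - c) * y ^ m := by rw [← hy]; ring
      rw [ex, ey]; ring

private lemma round_eq_of_abs_lt {x : ℝ} {m : ℤ} (h : |x - (m : ℝ)| < 1 / 2) :
    round x = m := by
  have h1 : |x - (round x : ℝ)| ≤ |x - (m : ℝ)| := round_le x m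
  have h2 : |((round x : ℝ)) - (m : ℝ)| < 1 := by
    have he : ((round x : ℝ)) - m = (x - m) + ((round x : ℝ) - x) := by ring
    rw [he]
    have h3 := abs_add_le (x - (m : ℝ)) ((round x : ℝ) - x)
    have h4 : |((round x : ℝ)) - x| = |x - (round x : ℝ)| := abs_sub_comm _ _
    linarith
  have h5 : |((round x - m : ℤ) : ℝ)| < 1 := by push_cast; exact h2
  have h6 : |round x - m| < 1 := by exact_mod_cast h5
  rw [abs_lt] at h6
  omega

/-- A Pisot number `ζ` of degree 2 satisfies `σ̲(1,ζ) = σ̄(1,ζ) = 1`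
if and only if `ζ` is a Pisot unit. -/
theorem pisot_deg_two_sigma_one_iff_unit (ζ : ℝ) (hP : IsPisot ζ)
    (hdeg : (minpoly ℚ ζ).natDegree = 2) :
    (sigmaLower 1 ζ = 1 ∧ sigmaUpper 1 ζ = 1) ↔ IsPisotUnit ζ := by
  obtain ⟨hζ1, hint, hconj⟩ := hP
  set p : ℤ[X] := minpoly ℤ ζ with hp
  have hmap : minpoly ℚ ζ = p.map (algebraMap ℤ ℚ) :=
    minpoly.isIntegrallyClosed_eq_field_fractions' ℚ hint
  have hmonic : p.Monic := minpoly.monic hint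
  have hpdeg : p.natDegree = 2 := by
    rw [hmap, hmonic.natDegree_map] at hdeg; exact hdeg
  set b : ℤ := p.coeff 1 with hb
  set c : ℤ := p.coeff 0 with hc
  have hc2 : p.coeff 2 = 1 := by
    have := hmonic.coeff_natDegree; rwa [hpdeg] at this
  -- ζ is not rational
  have hζpos : (0 : ℝ) < ζ := lt_trans one_pos hζ1
  have hnotrat : ∀ q : ℚ, ζ ≠ (q : ℝ) := by
    intro q hq
    have halg : (q : ℝ) = algebraMap ℚ ℝ q := rfl
    rw [hq, halg, minpoly.eq_X_sub_C ℝ q] at hdeg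
    simp [natDegree_X_sub_C] at hdeg
  -- the quadratic relation
  have haev := minpoly.aeval ℤ ζ
  rw [← hp, aeval_eq_sum_range, hpdeg] at haev
  simp only [Finset.sum_range_succ, Finset.sum_range_zero, zero_add, zsmul_eq_mul,
    pow_zero, pow_one, hc2, ← hb, ← hc] at haev
  have hζsq : ζ ^ 2 = -(b : ℝ) * ζ - (c : ℝ) := by push_cast at haev ⊢; linarith
  set η : ℝ := -(b : ℝ) - ζ with hη
  have hsum : ζ + η = -(b : ℝ) := by rw [hη]; ring
  have hηsq : η ^ 2 = -(b : ℝ) * η - (c : ℝ) := by rw [hη]; nlinarith [hζsq]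
  have hprod : ζ * η = (c : ℝ) := by rw [hη]; nlinarith [hζsq]
  -- η is a root of minpoly ℚ ζ over ℂ
  have haevη : Polynomial.aeval η p = 0 := by
    rw [aeval_eq_sum_range, hpdeg]
    simp only [Finset.sum_range_succ, Finset.sum_range_zero, zero_add, zsmul_eq_mul,
      pow_zero, pow_one, hc2, ← hb, ← hc]
    push_cast
    nlinarith [hηsq]
  have hrootC : Polynomial.aeval (η : ℂ) (minpoly ℚ ζ) = 0 := by
    rw [hmap, aeval_map_algebraMap]
    have : ((η : ℂ)) = algebraMap ℝ ℂ η := rfl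
    rw [this, aeval_algebraMap_apply, haevη, map_zero]
  have hηneζ : (η : ℂ) ≠ (ζ : ℂ) := by
    intro h
    have hre : η = ζ := by exact_mod_cast h
    have : ζ = ((-(b : ℚ) / 2 : ℚ) : ℝ) := by push_cast; rw [hη] at hre; linarith
    exact hnotrat _ this
  have habs : |η| < 1 := by
    have := hconj (η : ℂ) hrootC hηneζ
    rwa [Complex.norm_real, Real.norm_eq_abs] at this
  have hηne0 : η ≠ 0 := by
    intro h
    have hc0 : (c : ℝ) = 0 := by rw [← hprod, h, mul_zero]
    have : ζ * ζ = -(b : ℝ) * ζ := by nlinarith [hζsq]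
    have hζb : ζ = -(b : ℝ) := mul_right_cancel₀ (ne_of_gt hζpos) this
    have : ζ = ((-(b : ℚ) : ℚ) : ℝ) := by push_cast; linarith
    exact hnotrat _ this
  set r : ℝ := |η| with hr
  have hr0 : 0 < r := abs_pos.mpr hηne0
  have hseq : ∀ n : ℕ, (auxseq b c n : ℝ) = ζ ^ n + η ^ n :=
    auxseq_spec b c ζ η hsum hζsq hηsq
  have hlogζ : 0 < Real.log ζ := Real.log_pos hζ1
  set L : ℝ := -(Real.log r / Real.log ζ) with hL
  -- eventually, sigmaFn is constant equal to L
  have hpow : Tendsto (fun n : ℕ => r ^ n) atTop (nhds 0) :=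
    tendsto_pow_atTop_nhds_zero_of_lt_one hr0.le habs
  have hev2 : ∀ᶠ n : ℕ in atTop, r ^ n < 1 / 2 :=
    hpow.eventually_lt_const (by norm_num)
  have hev : ∀ᶠ n : ℕ in atTop, sigmaFn 1 ζ n = ((L : ℝ) : EReal) := by
    filter_upwards [hev2, eventually_ge_atTop 1] with n hn2 hn1
    have hsn := hseq n
    have hdist : |ζ ^ n - (auxseq b c n : ℝ)| = r ^ n := by
      have : ζ ^ n - (auxseq b c n : ℝ) = -η ^ n := by rw [hsn]; ring
      rw [this, abs_neg, abs_pow]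
    have hround : round (ζ ^ n) = auxseq b c n :=
      round_eq_of_abs_lt (by rw [hdist]; exact hn2)
    have hnotint : ¬ ∃ m : ℤ, (1 : ℝ) * ζ ^ n = (m : ℝ) := by
      rintro ⟨m, hm⟩
      rw [one_mul] at hm
      have hηn : η ^ n = ((auxseq b c n - m : ℤ) : ℝ) := by
        push_cast; rw [← hm]; linarith [hsn]
      have h1 : |((auxseq b c n - m : ℤ) : ℝ)| < 1 := by
        rw [← hηn, abs_pow]; calc r ^ n < 1 / 2 := hn2
                                  _ < 1 := by norm_num
      have h2 : |auxseq b c n - m| < 1 := by exact_mod_cast h1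
      rw [abs_lt] at h2
      have h3 : auxseq b c n - m = 0 := by omega
      rw [h3] at hηn
      simp at hηn
      exact hηne0 hηn.1
    rw [sigmaFn, if_neg hnotint]
    congr 1
    rw [one_mul, nearestDist, hround, hdist, Real.log_pow]
    rw [hL, mul_div_mul_left _ _ (by exact_mod_cast (by omega : n ≠ 0) : (n : ℝ) ≠ 0)]
  have hlow : sigmaLower 1 ζ = ((L : ℝ) : EReal) := by
    rw [sigmaLower, liminf_congr hev, liminf_const]
  have hupp : sigmaUpper 1 ζ = ((L : ℝ) : EReal) := by
    rw [sigmaUpper, limsup_congr hev, limsup_const]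
  -- the key equivalence: L = 1 ↔ |c| = 1
  have hLiff : L = 1 ↔ (c = 1 ∨ c = -1) := by
    have hrζ : r * ζ = |(c : ℝ)| := by
      rw [← hprod, abs_mul, abs_of_pos hζpos, hr]; ring
    constructor
    · intro h
      have hd : Real.log r / Real.log ζ = -1 := by rw [hL] at h; linarith
      have hlr : Real.log r = -Real.log ζ := by
        field_simp at hd; linarith
      have hmul : Real.log (r * ζ) = 0 := by
        rw [Real.log_mul (ne_of_gt hr0) (ne_of_gt hζpos), hlr]; ring
      have hrζpos : 0 < r * ζ := mul_pos hr0 hζpos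
      have h1 : r * ζ = 1 := by
        rcases Real.log_eq_zero.mp hmul with h | h | h
        · exact absurd h (ne_of_gt hrζpos)
        · exact h
        · linarith
      have : |(c : ℝ)| = 1 := by rw [← hrζ]; exact h1
      have h2 : |c| = 1 := by exact_mod_cast (by rwa [← Int.cast_abs] at this : ((|c| : ℤ) : ℝ) = 1)
      exact (abs_eq (by norm_num)).mp h2
    · intro h
      have hcabs : |(c : ℝ)| = 1 := by
        rcases h with h | h <;> rw [h] <;> norm_num
      have h1 : r * ζ = 1 := by rw [hrζ, hcabs]
      have hlr : Real.log r + Real.log ζ = 0 := by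
        rw [← Real.log_mul (ne_of_gt hr0) (ne_of_gt hζpos), h1, Real.log_one]
      rw [hL]
      field_simp
      linarith
  constructor
  · rintro ⟨h1, _⟩
    rw [hlow] at h1
    have hL1 : L = 1 := by exact_mod_cast h1
    exact ⟨⟨hζ1, hint, hconj⟩, hLiff.mp hL1⟩
  · rintro ⟨_, hcu⟩
    have hL1 : L = 1 := hLiff.mpr hcu
    rw [hlow, hupp, hL1]
    exact ⟨by norm_num, by norm_num⟩
end

section
/- The set { t ∈ ℝ : there exists a Pisot number ζ of degree 2 with σ̲(1,ζ) = σ̄(1,ζ) = t } is dense in the interval (0, 1]. -/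
open Filter Polynomial

private lemma not_isSquare_between (a b : ℕ) (hb : 1 ≤ b) (hab : 2*b ≤ a) :
    ¬ IsSquare (a^2 + 4*b) := by
  rintro ⟨k, hk⟩
  have h1 : a*a < k*k := by nlinarith
  have h2 : k*k < (a+1)*(a+1) := by nlinarith
  have hak : a < k := by
    by_contra h
    push_neg at h
    exact absurd (Nat.mul_le_mul h h) (by omega)
  have : a + 1 ≤ k := hak
  exact absurd (Nat.mul_le_mul this this) (by omega)

private def lseq (a b : ℕ) : ℕ → ℤ
  | 0 => 2
  | 1 => a
  | n+2 => a * lseq a b (n+1) + b * lseq a b n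

private lemma lseq_eq (a b : ℕ) (x y : ℝ) (h1 : x + y = a) (h2 : x*y = -(b:ℝ)) :
    ∀ n, x^n + y^n = (lseq a b n : ℝ) := by
  have H : ∀ n, (x^n + y^n = (lseq a b n : ℝ)) ∧ (x^(n+1) + y^(n+1) = (lseq a b (n+1) : ℝ)) := by
    intro n
    induction n with
    | zero =>
      refine ⟨by norm_num [lseq], ?_⟩
      simp only [lseq]
      push_cast
      simpa using h1
    | succ k ih =>
      refine ⟨ih.2, ?_⟩
      have e1 := ih.1
      have e2 := ih.2
      show x^(k+2) + y^(k+2) = ((lseq a b (k+2) : ℤ) : ℝ)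
      simp only [lseq]
      push_cast
      rw [← e1, ← e2]
      linear_combination (x^(k+1) + y^(k+1)) * h1 - (x^k + y^k) * h2
  exact fun n => (H n).1

private lemma key_lemma (a b : ℕ) (hb : 1 ≤ b) (hab : 2*b ≤ a) :
    ∃ ζ : ℝ, (a:ℝ) < ζ ∧ ζ < (a:ℝ) + 1 ∧ IsPisot ζ ∧ (minpoly ℚ ζ).natDegree = 2 ∧
      sigmaLower 1 ζ = ((1 - Real.log b / Real.log ζ : ℝ) : EReal) ∧
      sigmaUpper 1 ζ = ((1 - Real.log b / Real.log ζ : ℝ) : EReal) := by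
  have ha2 : 2 ≤ a := by omega
  set D : ℝ := (a:ℝ)^2 + 4*b with hD
  have hbR : (1:ℝ) ≤ b := by exact_mod_cast hb
  have haR : (2:ℝ) ≤ a := by exact_mod_cast ha2
  have habR : 2*(b:ℝ) ≤ a := by exact_mod_cast hab
  have hD0 : 0 ≤ D := by positivity
  have hsq : Real.sqrt D ^ 2 = D := Real.sq_sqrt hD0
  have hsd0 : 0 ≤ Real.sqrt D := Real.sqrt_nonneg D
  have hlt1 : (a:ℝ) < Real.sqrt D := by
    nlinarith [hsq, hsd0]
  have hlt2 : Real.sqrt D < (a:ℝ) + 1 := by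
    nlinarith [hsq, hsd0]
  set ζ : ℝ := ((a:ℝ) + Real.sqrt D)/2 with hζdef
  set ζ' : ℝ := ((a:ℝ) - Real.sqrt D)/2 with hζ'def
  have hsum : ζ + ζ' = a := by rw [hζdef, hζ'def]; ring
  have hprod : ζ * ζ' = -(b:ℝ) := by
    rw [hζdef, hζ'def]
    linear_combination (-(1:ℝ)/4) * hsq
  have hζa : (a:ℝ) < ζ := by rw [hζdef]; linarith
  have hζa1 : ζ < (a:ℝ) + 1 := by rw [hζdef]; linarith
  have hζ1 : (1:ℝ) < ζ := by linarith
  have hζ0 : (0:ℝ) < ζ := by linarith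
  set η : ℝ := (b:ℝ)/ζ with hηdef
  have hη0 : 0 < η := by positivity
  have hζ'η : ζ' = -η := by
    have h : ζ * (-η) = -(b:ℝ) := by
      rw [hηdef]; field_simp
    exact mul_left_cancel₀ (ne_of_gt hζ0) (hprod.trans h.symm)
  have hη2 : η < 1/2 := by
    rw [hηdef, div_lt_iff₀ hζ0]
    linarith
  have hζsq : ζ^2 = (a:ℝ)*ζ + b := by linear_combination ζ * hsum - hprod
  -- integrality over ℤ
  have hint : IsIntegral ℤ ζ := by
    refine ⟨X^2 - C (a:ℤ) * X - C (b:ℤ), ?_, ?_⟩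
    · have h : (X^2 - C (a:ℤ) * X - C (b:ℤ)) = X^2 + C (-(a:ℤ)) * X + C (-(b:ℤ)) := by
        simp [map_neg]; ring
      rw [h]
      monicity!
    · simp only [eval₂_sub, eval₂_mul, eval₂_pow, eval₂_X, eval₂_C]
      push_cast
      linear_combination hζsq
  -- minimal polynomial over ℚ
  set pQ : ℚ[X] := X^2 - C (a:ℚ) * X - C (b:ℚ) with hpQdef
  have hpQmonic : pQ.Monic := by
    have h : pQ = X^2 + C (-(a:ℚ)) * X + C (-(b:ℚ)) := by
      rw [hpQdef]; simp [map_neg]; ring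
    rw [h]
    monicity!
  have hpQdeg : pQ.natDegree = 2 := by
    rw [hpQdef]
    compute_degree!
  have hpQeval : Polynomial.aeval ζ pQ = 0 := by
    rw [hpQdef]
    simp only [map_sub, map_mul, map_pow, aeval_X, aeval_C]
    push_cast
    linear_combination hζsq
  have hirr : Irrational ζ := by
    have h1 : Irrational (Real.sqrt D) := by
      have hns := not_isSquare_between a b hb hab
      have h2 := irrational_sqrt_natCast_iff.mpr hns
      have : ((a^2 + 4*b : ℕ) : ℝ) = D := by push_cast; ring
      rwa [this] at h2
    have h2 : Irrational ((a:ℝ) + Real.sqrt D) := h1.natCast_add a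
    have h3 := h2.div_natCast (m := 2) (by norm_num)
    have : ((a:ℝ) + Real.sqrt D) / (2:ℕ) = ζ := by rw [hζdef]; norm_num
    rwa [this] at h3
  have hζQint : IsIntegral ℚ ζ := ⟨pQ, hpQmonic, by rwa [Polynomial.aeval_def] at hpQeval⟩
  have hdvd : minpoly ℚ ζ ∣ pQ := minpoly.dvd ℚ ζ hpQeval
  have hμmon : (minpoly ℚ ζ).Monic := minpoly.monic hζQint
  have hle : (minpoly ℚ ζ).natDegree ≤ 2 := hpQdeg ▸ Polynomial.natDegree_le_of_dvd hdvd hpQmonic.ne_zero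
  have hne1 : (minpoly ℚ ζ).natDegree ≠ 1 := by
    intro h
    rcases minpoly.natDegree_eq_one_iff.mp h with ⟨q, hq⟩
    exact hirr ⟨q, by rw [← hq]; exact (eq_ratCast (algebraMap ℚ ℝ) q).symm ▸ rfl⟩
  have hpos : 0 < (minpoly ℚ ζ).natDegree := minpoly.natDegree_pos hζQint
  have hdeg2 : (minpoly ℚ ζ).natDegree = 2 := by omega
  have hμ : minpoly ℚ ζ = pQ :=
    Polynomial.eq_of_dvd_of_natDegree_le_of_leadingCoeff hdvd
      (by rw [hdeg2, hpQdeg]) (by rw [hμmon.leadingCoeff, hpQmonic.leadingCoeff])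
  -- Pisot
  have hpisot : IsPisot ζ := by
    refine ⟨hζ1, hint, ?_⟩
    intro z hz hzne
    rw [hμ] at hz
    have hz' : z^2 - (a:ℂ)*z - (b:ℂ) = 0 := by
      rw [hpQdef] at hz
      simp only [map_sub, map_mul, map_pow, aeval_X, aeval_C] at hz
      push_cast at hz
      linear_combination hz
    have hsumC : (ζ:ℂ) + (ζ':ℂ) = (a:ℂ) := by exact_mod_cast hsum
    have hprodC : (ζ:ℂ) * (ζ':ℂ) = -(b:ℂ) := by exact_mod_cast hprod
    have hfac : (z - ζ) * (z - ζ') = 0 := by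
      linear_combination hz' - z*hsumC + hprodC
    rcases mul_eq_zero.mp hfac with h | h
    · exact absurd (sub_eq_zero.mp h) hzne
    · have hzz : z = (ζ':ℂ) := sub_eq_zero.mp h
      rw [hzz, Complex.norm_real, Real.norm_eq_abs, hζ'η, abs_neg, abs_of_pos hη0]
      linarith
  -- sigma values
  have hζ'ne : ζ' ≠ 0 := by rw [hζ'η]; intro h; nlinarith [neg_eq_zero.mp h]
  have hseq := lseq_eq a b ζ ζ' hsum hprod
  have hlogζ : 0 < Real.log ζ := Real.log_pos hζ1
  set r : ℝ := 1 - Real.log b / Real.log ζ with hrdef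
  have hη1 : η < 1 := by linarith
  have hsig : ∀ n : ℕ, 1 ≤ n → sigmaFn 1 ζ n = ((r : ℝ) : EReal) := by
    intro n hn
    have hmem : ζ^n = ((lseq a b n : ℤ) : ℝ) - ζ'^n := by
      have := hseq n; linarith
    have hηn_pos : 0 < η^n := pow_pos hη0 n
    have hηn_lt : η^n < 1/2 := by
      calc η^n ≤ η^1 := pow_le_pow_of_le_one (le_of_lt hη0) (le_of_lt hη1) hn
        _ = η := pow_one η
        _ < 1/2 := hη2
    have habsζ' : |ζ'^n| = η^n := by
      rw [abs_pow, hζ'η, abs_neg, abs_of_pos hη0]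
    have hnotint : ¬ ∃ m : ℤ, 1 * ζ^n = ((m:ℤ) : ℝ) := by
      rintro ⟨m, hm⟩
      rw [one_mul] at hm
      have h1 : (((lseq a b n) - m : ℤ) : ℝ) = ζ'^n := by
        push_cast
        rw [← hm, hmem]; ring
      have h2 : |(((lseq a b n) - m : ℤ) : ℝ)| < 1 := by
        rw [h1, habsζ']; linarith
      rw [← Int.cast_abs] at h2
      have h3 : |lseq a b n - m| < 1 := by exact_mod_cast h2
      have h4 : lseq a b n - m = 0 := Int.abs_lt_one_iff.mp h3
      rw [h4] at h1
      simp only [Int.cast_zero] at h1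
      exact pow_ne_zero n hζ'ne h1.symm
    have hround : round (1 * ζ^n) = lseq a b n := by
      rw [one_mul, hmem]
      rw [show ((lseq a b n : ℤ) : ℝ) - ζ'^n = (-ζ'^n) + ((lseq a b n : ℤ) : ℝ) from by ring]
      rw [show ((lseq a b n : ℤ) : ℝ) = (((lseq a b n : ℤ) : ℤ) : ℝ) from rfl]
      rw [round_add_intCast]
      have habs' : |(-ζ'^n)| < 1/2 := by rw [abs_neg, habsζ']; linarith
      rw [round_eq_zero_iff.mpr ?_, zero_add]
      rcases abs_lt.mp habs' with ⟨hl, hr⟩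
      exact Set.mem_Ico.mpr ⟨by linarith, hr⟩
    have hnd : nearestDist (1 * ζ^n) = η^n := by
      rw [nearestDist, hround, one_mul, hmem]
      rw [show ((lseq a b n : ℤ) : ℝ) - ζ'^n - ((lseq a b n : ℤ) : ℝ) = -ζ'^n from by ring]
      rw [abs_neg, habsζ']
    rw [sigmaFn, if_neg hnotint, hnd]
    congr 1
    rw [Real.log_pow]
    have hn0 : (n:ℝ) ≠ 0 := by positivity
    have hlogη : Real.log η = Real.log b - Real.log ζ := by
      rw [hηdef, Real.log_div (by positivity) (ne_of_gt hζ0)]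
    rw [hlogη, hrdef]
    field_simp
    ring
  have hev : sigmaFn 1 ζ =ᶠ[atTop] (fun _ => ((r:ℝ) : EReal)) := by
    filter_upwards [eventually_ge_atTop 1] with n hn using hsig n hn
  refine ⟨ζ, hζa, hζa1, hpisot, by rw [hμ]; exact hpQdeg, ?_, ?_⟩
  · rw [sigmaLower, Filter.liminf_congr hev, Filter.liminf_const]
  · rw [sigmaUpper, Filter.limsup_congr hev, Filter.limsup_const]

private lemma density_est (ε t : ℝ) (hε : 0 < ε) (ht0 : 0 < t) (ht1 : t ≤ 1) :
    ∃ N b : ℕ, 1 ≤ b ∧ 2*b ≤ N ∧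
      ∀ ζ : ℝ, (N:ℝ) < ζ → ζ < (N:ℝ) + 1 →
        |t - (1 - Real.log b / Real.log ζ)| < ε := by
  set s : ℝ := 1 - t with hsdef
  have hs0 : 0 ≤ s := by linarith
  have hs1 : s < 1 := by linarith
  set M : ℝ := max (1/ε + 1) (2/t + 2) with hMdef
  obtain ⟨N, hN⟩ : ∃ N : ℕ, M ≤ Real.log N := by
    refine ⟨⌈Real.exp M⌉₊, ?_⟩
    have h1 : Real.exp M ≤ (⌈Real.exp M⌉₊ : ℝ) := Nat.le_ceil _
    calc M = Real.log (Real.exp M) := (Real.log_exp M).symm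
      _ ≤ Real.log _ := Real.log_le_log (Real.exp_pos _) h1
  have hM1 : 1/ε + 1 ≤ M := le_max_left _ _
  have hM2 : 2/t + 2 ≤ M := le_max_right _ _
  set L : ℝ := Real.log N with hLdef
  have hL1 : 1/ε + 1 ≤ L := le_trans hM1 hN
  have hL2 : 2/t + 2 ≤ L := le_trans hM2 hN
  have hLpos : 0 < L := lt_of_lt_of_le (by positivity) hL1
  have hN1 : (1:ℝ) < N := by
    by_contra h
    push_neg at h
    have : Real.log N ≤ 0 := Real.log_nonpos (by positivity) h
    linarith
  have hN0 : (0:ℝ) < N := by linarith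
  set b : ℕ := ⌈(N:ℝ) ^ s⌉₊ with hbdef
  have hrpos : (0:ℝ) < (N:ℝ)^s := Real.rpow_pos_of_pos hN0 s
  have hr1 : (1:ℝ) ≤ (N:ℝ)^s := Real.one_le_rpow hN1.le hs0
  have hb1 : 1 ≤ b := Nat.one_le_ceil_iff.mpr hrpos
  have hbub : (b:ℝ) ≤ (N:ℝ)^s + 1 := le_of_lt (Nat.ceil_lt_add_one (le_of_lt hrpos))
  have hblb : (N:ℝ)^s ≤ b := Nat.le_ceil _
  have hNt : (4:ℝ) ≤ (N:ℝ)^t := by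
    have he : (N:ℝ)^t = Real.exp (t * L) := by
      rw [Real.rpow_def_of_pos hN0, hLdef, mul_comm]
    rw [he]
    have h2 : (2:ℝ) ≤ t * L := by
      have hinv : t * (2/t) = 2 := by field_simp
      nlinarith
    have hexp2 : (4:ℝ) ≤ Real.exp 2 := by
      have e1 := Real.exp_one_gt_d9
      have : Real.exp 2 = Real.exp 1 * Real.exp 1 := by
        rw [← Real.exp_add]; norm_num
      nlinarith
    calc (4:ℝ) ≤ Real.exp 2 := hexp2
      _ ≤ Real.exp (t*L) := Real.exp_le_exp.mpr h2
  have hmul : (N:ℝ)^s * (N:ℝ)^t = N := by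
    rw [← Real.rpow_add hN0]
    rw [show s + t = 1 from by rw [hsdef]; ring]
    exact Real.rpow_one _
  have hNs : (N:ℝ)^s ≤ (N:ℝ)/4 := by nlinarith
  have h4N : (4:ℝ) ≤ N := by nlinarith
  have hab : 2*b ≤ N := by
    have h : ((2*b : ℕ) : ℝ) ≤ (N:ℝ) := by push_cast; nlinarith
    exact_mod_cast h
  refine ⟨N, b, hb1, hab, ?_⟩
  intro ζ hζN hζN1
  have hζ1 : (1:ℝ) < ζ := by linarith
  have hzpos : 0 < Real.log ζ := Real.log_pos hζ1
  have hlogζ1 : L ≤ Real.log ζ := by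
    rw [hLdef]; exact Real.log_le_log hN0 hζN.le
  have hlog2 : Real.log 2 ≤ 1 := by
    have := Real.log_two_lt_d9; linarith
  have hlogζ2 : Real.log ζ ≤ L + 1 := by
    calc Real.log ζ ≤ Real.log ((N:ℝ)+1) := Real.log_le_log (by linarith) hζN1.le
      _ ≤ Real.log (2*N) := Real.log_le_log (by linarith) (by linarith)
      _ = Real.log 2 + L := by rw [Real.log_mul (by norm_num) (ne_of_gt hN0), hLdef]
      _ ≤ L + 1 := by linarith
  have hlogb1 : s * L ≤ Real.log b := by
    calc s * L = Real.log ((N:ℝ)^s) := (Real.log_rpow hN0 s).symm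
      _ ≤ Real.log b := Real.log_le_log hrpos hblb
  have hlogb2 : Real.log b ≤ s*L + 1 := by
    calc Real.log b ≤ Real.log ((N:ℝ)^s + 1) := Real.log_le_log (by positivity) hbub
      _ ≤ Real.log (2 * (N:ℝ)^s) := Real.log_le_log (by linarith) (by linarith)
      _ = Real.log 2 + s*L := by rw [Real.log_mul (by norm_num) (ne_of_gt hrpos), Real.log_rpow hN0]
      _ ≤ s*L + 1 := by linarith
  have hlogb0 : 0 ≤ Real.log b := by
    apply Real.log_nonneg
    exact_mod_cast hb1
  clear_value s M L b
  have hinvL : 1/L * L = 1 := by field_simp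
  have key1 : Real.log b / Real.log ζ ≤ s + 1/L := by
    rw [div_le_iff₀ hzpos]
    have ha1 : s * L ≤ s * Real.log ζ := mul_le_mul_of_nonneg_left hlogζ1 hs0
    have ha2 : 1/L * L ≤ 1/L * Real.log ζ := mul_le_mul_of_nonneg_left hlogζ1 (by positivity)
    linarith [hinvL, hlogb2]
  have key2 : s - 1/L ≤ Real.log b / Real.log ζ := by
    rw [le_div_iff₀ hzpos]
    have hb1' : s * Real.log ζ ≤ s * (L+1) := mul_le_mul_of_nonneg_left hlogζ2 hs0
    have ha2 : 1/L * L ≤ 1/L * Real.log ζ := mul_le_mul_of_nonneg_left hlogζ1 (by positivity)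
    linarith [hinvL, hlogb1, hs1]
  have hfin : 1/L < ε := by
    rw [div_lt_iff₀ hLpos]
    have h1 : ε * (1/ε + 1) ≤ ε * L := mul_le_mul_of_nonneg_left hL1 hε.le
    have h2 : ε * (1/ε + 1) = 1 + ε := by
      rw [mul_add, mul_one, mul_one_div, div_self (ne_of_gt hε)]
    linarith
  rw [abs_lt]
  constructor <;> linarith

/-- The set of values `t = σ̲(1,ζ) = σ̄(1,ζ)` taken over Pisot numbers `ζ` of
degree 2 is dense in `(0,1]`. -/
theorem pisot_deg_two_sigma_values_dense :
    Set.Ioc (0 : ℝ) 1 ⊆ closure {t : ℝ |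
      ∃ ζ : ℝ, IsPisot ζ ∧ (minpoly ℚ ζ).natDegree = 2 ∧
        sigmaLower 1 ζ = (t : EReal) ∧ sigmaUpper 1 ζ = (t : EReal)} := by
  intro t ht
  obtain ⟨ht0, ht1⟩ := ht
  rw [Metric.mem_closure_iff]
  intro ε hε
  obtain ⟨N, b, hb1, hab, hest⟩ := density_est ε t hε ht0 ht1
  obtain ⟨ζ, hζN, hζN1, hpis, hdeg, hlow, hup⟩ := key_lemma N b hb1 hab
  refine ⟨1 - Real.log b / Real.log ζ, ⟨ζ, hpis, hdeg, hlow, hup⟩, ?_⟩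
  rw [Real.dist_eq]
  exact hest ζ hζN hζN1
end

section
/- Let k ≥ 2 and let M, N be integers with M ≥ 3 and 1 ≤ N ≤ M − 2. Then the polynomial Q(X) = X^k − M·X^{k−1} + N has exactly one complex root ζ with |ζ| ≥ 1; this root is real with ζ > 1, all other complex roots of Q have absolute value strictly less than 1, Q is irreducible over ℚ, and ζ is a Pisot number of degree k with minimal polynomial Q. -/
open Filter Polynomial

lemma contract_ineq (M N : ℤ) (hM : 3 ≤ M) (hN1 : 1 ≤ N) (hN2 : N ≤ M - 2) :
    ∀ k : ℕ, 2 ≤ k → N * (k - 1 : ℕ) * 2 ^ k < (M + 2) ^ k := by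
  intro k hk
  induction k with
  | zero => omega
  | succ n ih =>
    rcases Nat.lt_or_ge n 2 with hn | hn
    · interval_cases n
      · omega
      · push_cast; nlinarith
    · have h1 := ih hn
      set a : ℤ := ((n - 1 : ℕ) : ℤ) with ha
      have hna : (n : ℤ) = a + 1 := by rw [ha]; push_cast [Nat.cast_sub (by omega : 1 ≤ n)]; ring
      have hcast : ((n + 1 - 1 : ℕ) : ℤ) = a + 1 := by rw [← hna]; norm_num
      have hn1 : (1:ℤ) ≤ a := by rw [ha]; exact_mod_cast (by omega : 1 ≤ n - 1)
      have key : 2 * (a + 1) ≤ (M + 2) * a := by nlinarith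
      have h2 : (0:ℤ) < 2 ^ n := by positivity
      have h3 : N * (a + 1) * 2 ^ (n+1) ≤ (M + 2) * (N * a * 2 ^ n) := by
        have : N * (a + 1) * 2 ^ (n+1) = (2 * (a+1)) * (N * 2^n) := by ring
        rw [this]
        have h4 : (2 * (a + 1)) * (N * 2^n) ≤ ((M+2) * a) * (N * 2^n) := by
          apply mul_le_mul_of_nonneg_right key (by positivity)
        calc (2 * (a + 1)) * (N * 2^n) ≤ ((M+2) * a) * (N * 2^n) := h4
          _ = (M + 2) * (N * a * 2 ^ n) := by ring
      have h5 : (M + 2) * (N * a * 2 ^ n) < (M + 2) * (M + 2) ^ n := by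
        apply mul_lt_mul_of_pos_left h1 (by omega)
      calc N * ((n + 1 - 1 : ℕ) : ℤ) * 2 ^ (n+1) = N * (a+1) * 2^(n+1) := by rw [hcast]
        _ ≤ (M + 2) * (N * a * 2 ^ n) := h3
        _ < (M + 2) * (M + 2) ^ n := h5
        _ = (M + 2) ^ (n + 1) := by ring


lemma tri_aux (z w : ℂ) : ‖w‖ - ‖z - w‖ ≤ ‖z‖ := by
  have h := norm_sub_norm_le w (w - z)
  have h1 : w - (w - z) = z := by ring
  rw [h1] at h
  have h2 : ‖w - z‖ = ‖z - w‖ := norm_sub_rev _ _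
  linarith

lemma root_loc (M N : ℤ) (hM : 3 ≤ M) (hN1 : 1 ≤ N) (hN2 : N ≤ M - 2)
    (j : ℕ) (hj : 1 ≤ j) (z : ℂ)
    (hroot : z ^ (j+1) - (M:ℂ) * z ^ j + (N:ℂ) = 0) (h1 : 1 ≤ ‖z‖) :
    ‖z - (M:ℂ)‖ ≤ (N:ℝ) / 2 ∧ ((M:ℝ) + 2) / 2 ≤ ‖z‖ := by
  have hMr : (3:ℝ) ≤ (M:ℝ) := by exact_mod_cast hM
  have hNr : (1:ℝ) ≤ (N:ℝ) := by exact_mod_cast hN1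
  have hNM : (N:ℝ) ≤ (M:ℝ) - 2 := by
    have : (N:ℝ) ≤ ((M - 2 : ℤ) : ℝ) := by exact_mod_cast hN2
    push_cast at this; linarith
  have key : z ^ j * (z - (M:ℂ)) = -(N:ℂ) := by
    have : z ^ (j+1) = z ^ j * z := by ring
    linear_combination hroot
  have habs : ‖z‖ ^ j * ‖z - (M:ℂ)‖ = (N:ℝ) := by
    have := congrArg norm key
    simpa [map_mul, map_pow, abs_of_nonneg (by linarith : (0:ℝ) ≤ (N:ℝ))] using this
  have hpow1 : (1:ℝ) ≤ ‖z‖ ^ j := one_le_pow₀ h1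
  have h2 : ‖z - (M:ℂ)‖ ≤ (N:ℝ) := by
    nlinarith [norm_nonneg (z - (M:ℂ))]
  have hMabs : ‖(M:ℂ)‖ = (M:ℝ) := by
    rw [Complex.norm_intCast]; exact abs_of_nonneg (by linarith)
  have h3 : (2:ℝ) ≤ ‖z‖ := by
    have := tri_aux z (M:ℂ)
    rw [hMabs] at this; linarith
  have h4 : (2:ℝ) ≤ ‖z‖ ^ j := by
    calc (2:ℝ) = 2 ^ 1 := by norm_num
      _ ≤ 2 ^ j := by apply pow_le_pow_right₀ (by norm_num) hj
      _ ≤ ‖z‖ ^ j := by apply pow_le_pow_left₀ (by norm_num) h3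
  have h5 : ‖z - (M:ℂ)‖ ≤ (N:ℝ) / 2 := by
    nlinarith [norm_nonneg (z - (M:ℂ))]
  refine ⟨h5, ?_⟩
  have := tri_aux z (M:ℂ)
  rw [hMabs] at this; linarith



lemma root_unique (M N : ℤ) (hM : 3 ≤ M) (hN1 : 1 ≤ N) (hN2 : N ≤ M - 2)
    (j : ℕ) (hj : 1 ≤ j) (z w : ℂ)
    (hz : z ^ (j+1) - (M:ℂ) * z ^ j + (N:ℂ) = 0) (hz1 : 1 ≤ ‖z‖)
    (hw : w ^ (j+1) - (M:ℂ) * w ^ j + (N:ℂ) = 0) (hw1 : 1 ≤ ‖w‖) :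
    z = w := by
  have hMr : (3:ℝ) ≤ (M:ℝ) := by exact_mod_cast hM
  have hNr : (1:ℝ) ≤ (N:ℝ) := by exact_mod_cast hN1
  have hNM : (N:ℝ) ≤ (M:ℝ) - 2 := by
    have : (N:ℝ) ≤ ((M - 2 : ℤ) : ℝ) := by exact_mod_cast hN2
    push_cast at this; linarith
  set s : Set ℂ := Metric.closedBall ((M:ℂ)) ((N:ℝ)/2) with hs
  -- membership
  have hmem : ∀ u : ℂ, u ^ (j+1) - (M:ℂ) * u ^ j + (N:ℂ) = 0 → 1 ≤ ‖u‖ → u ∈ s := by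
    intro u hu hu1
    have := (root_loc M N hM hN1 hN2 j hj u hu hu1).1
    simpa [hs, Metric.mem_closedBall, Complex.dist_eq] using this
  -- lower bound on abs within s
  have hlow : ∀ x ∈ s, ((M:ℝ) + 2) / 2 ≤ ‖x‖ := by
    intro x hx
    simp only [hs, Metric.mem_closedBall, Complex.dist_eq] at hx
    have := tri_aux x ((M:ℂ))
    have hMabs : ‖(M:ℂ)‖ = (M:ℝ) := by
      rw [Complex.norm_intCast]; exact abs_of_nonneg (by linarith)
    rw [hMabs] at this; linarith
  have hne : ∀ x ∈ s, x ≠ 0 := by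
    intro x hx h0
    have := hlow x hx
    rw [h0] at this; simp at this; linarith
  -- fixed point equation
  have hfix : ∀ u : ℂ, u ^ (j+1) - (M:ℂ) * u ^ j + (N:ℂ) = 0 → 1 ≤ ‖u‖ →
      u = (M:ℂ) - (N:ℂ) * (u ^ j)⁻¹ := by
    intro u hu hu1
    have hu0 : u ≠ 0 := hne u (hmem u hu hu1)
    have hp : (u:ℂ) ^ j ≠ 0 := pow_ne_zero _ hu0
    field_simp
    linear_combination hu
  -- contraction constant
  set C : ℝ := (N:ℝ) * j * 2 ^ (j+1) / ((M:ℝ) + 2) ^ (j+1) with hC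
  have hClt : C < 1 := by
    rw [hC, div_lt_one (by positivity)]
    have := contract_ineq M N hM hN1 hN2 (j+1) (by omega)
    have h2 : ((j + 1 - 1 : ℕ) : ℤ) = (j : ℤ) := by omega
    rw [h2] at this
    exact_mod_cast this
  -- derivative bound
  have hd : ∀ x ∈ s, HasDerivWithinAt (fun u : ℂ => (M:ℂ) - (N:ℂ) * (u ^ j)⁻¹)
      (-((N:ℂ) * (-((j:ℂ) * x ^ (j-1)) / (x ^ j) ^ 2))) s x := by
    intro x hx
    exact ((((hasDerivAt_pow j x).inv (pow_ne_zero j (hne x hx))).const_mul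
      ((N:ℂ))).const_sub ((M:ℂ))).hasDerivWithinAt
  have hbound : ∀ x ∈ s, ‖(-((N:ℂ) * (-((j:ℂ) * x ^ (j-1)) / (x ^ j) ^ 2)))‖ ≤ C := by
    intro x hx
    have ha : ((M:ℝ) + 2) / 2 ≤ ‖x‖ := hlow x hx
    have ha0 : (0:ℝ) < ‖x‖ := by linarith
    have heq : ‖(-((N:ℂ) * (-((j:ℂ) * x ^ (j-1)) / (x ^ j) ^ 2)))‖
        = (N:ℝ) * j * ‖x‖ ^ (j-1) / (‖x‖ ^ j) ^ 2 := by
      simp only [norm_neg, norm_mul, norm_div, norm_pow, map_mul, map_div₀,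
        norm_neg, map_pow]
      rw [Complex.norm_intCast, Complex.norm_natCast, abs_of_nonneg (by linarith : (0:ℝ) ≤ (N:ℝ))]
      ring
    rw [heq]
    have hmulsplit : ‖x‖ ^ (j-1) * ‖x‖ ^ (j+1)
        = (‖x‖ ^ j) ^ 2 := by
      rw [← pow_add, ← pow_mul]; congr 1; omega
    have hsplit : ‖x‖ ^ (j-1) / (‖x‖ ^ j) ^ 2
        = 1 / ‖x‖ ^ (j+1) := by
      rw [div_eq_div_iff (by positivity) (by positivity), one_mul, hmulsplit]
    have hpa : (((M:ℝ)+2)/2) ^ (j+1) ≤ ‖x‖ ^ (j+1) :=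
      pow_le_pow_left₀ (by linarith) ha _
    have hinv : 1 / ‖x‖ ^ (j+1) ≤ 1 / (((M:ℝ)+2)/2) ^ (j+1) :=
      one_div_le_one_div_of_le (by positivity) hpa
    calc (N:ℝ) * j * ‖x‖ ^ (j-1) / (‖x‖ ^ j) ^ 2
        = (N:ℝ) * j * (‖x‖ ^ (j-1) / (‖x‖ ^ j) ^ 2) := by ring
      _ = (N:ℝ) * j * (1 / ‖x‖ ^ (j+1)) := by rw [hsplit]
      _ ≤ (N:ℝ) * j * (1 / (((M:ℝ)+2)/2) ^ (j+1)) := by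
          apply mul_le_mul_of_nonneg_left hinv (by positivity)
      _ = C := by
          rw [hC, div_pow]
          rw [one_div_div]
          ring
  -- mean value
  have hmv := (convex_closedBall ((M:ℂ)) ((N:ℝ)/2)).norm_image_sub_le_of_norm_hasDerivWithin_le
    hd hbound (hmem w hw hw1) (hmem z hz hz1)
  rw [← hfix z hz hz1, ← hfix w hw hw1] at hmv
  have hCnn : 0 ≤ C := by rw [hC]; positivity
  have hn : ‖z - w‖ ≤ 0 := by nlinarith [norm_nonneg (z - w)]
  have := norm_nonneg (z - w)
  have : ‖z - w‖ = 0 := le_antisymm hn this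
  rwa [norm_sub_eq_zero_iff] at this


lemma zeta_exists (M N : ℤ) (hM : 3 ≤ M) (hN1 : 1 ≤ N) (hN2 : N ≤ M - 2)
    (j : ℕ) (hj : 1 ≤ j) :
    ∃ ζ : ℝ, (M:ℝ) - 1 < ζ ∧ ζ < (M:ℝ) ∧ ζ ^ (j+1) - (M:ℝ) * ζ ^ j + (N:ℝ) = 0 := by
  have hMr : (3:ℝ) ≤ (M:ℝ) := by exact_mod_cast hM
  have hNr : (1:ℝ) ≤ (N:ℝ) := by exact_mod_cast hN1
  have hNM : (N:ℝ) ≤ (M:ℝ) - 2 := by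
    have : (N:ℝ) ≤ ((M - 2 : ℤ) : ℝ) := by exact_mod_cast hN2
    push_cast at this; linarith
  set f : ℝ → ℝ := fun x => x ^ (j+1) - (M:ℝ) * x ^ j + (N:ℝ) with hf
  have hcont : ContinuousOn f (Set.Icc ((M:ℝ) - 1) (M:ℝ)) := by fun_prop
  have hfa : f ((M:ℝ) - 1) < 0 := by
    have hpow : (M:ℝ) - 1 ≤ ((M:ℝ) - 1) ^ j := le_self_pow₀ (by linarith) (by omega)
    have : f ((M:ℝ) - 1) = (N:ℝ) - ((M:ℝ) - 1) ^ j := by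
      simp only [hf]; rw [pow_succ]; ring
    rw [this]; linarith
  have hfb : 0 < f (M:ℝ) := by
    have : f (M:ℝ) = (N:ℝ) := by simp only [hf]; rw [pow_succ]; ring
    rw [this]; linarith
  have hsub := intermediate_value_Ioo (by linarith : (M:ℝ) - 1 ≤ (M:ℝ)) hcont
  have h0 : (0:ℝ) ∈ Set.Ioo (f ((M:ℝ) - 1)) (f (M:ℝ)) := ⟨hfa, hfb⟩
  obtain ⟨ζ, hζmem, hζ⟩ := hsub h0
  exact ⟨ζ, hζmem.1, hζmem.2, hζ⟩

lemma simple_root (M N : ℤ) (hM : 3 ≤ M) (hN1 : 1 ≤ N) (hN2 : N ≤ M - 2)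
    (j : ℕ) (hj : 1 ≤ j) (ζ : ℝ) (hz : (M:ℝ) - 1 < ζ)
    (hroot : ζ ^ (j+1) - (M:ℝ) * ζ ^ j + (N:ℝ) = 0)
    (hderiv : ((j:ℝ)+1) * ζ ^ j - (M:ℝ) * ((j:ℝ) * ζ ^ (j-1)) = 0) : False := by
  have hMr : (3:ℝ) ≤ (M:ℝ) := by exact_mod_cast hM
  have hNr : (1:ℝ) ≤ (N:ℝ) := by exact_mod_cast hN1
  have hNM : (N:ℝ) ≤ (M:ℝ) - 2 := by
    have : (N:ℝ) ≤ ((M - 2 : ℤ) : ℝ) := by exact_mod_cast hN2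
    push_cast at this; linarith
  have hz2 : (2:ℝ) < ζ := by linarith
  have hsucc : j - 1 + 1 = j := by omega
  have hpowsplit : ζ ^ j = ζ ^ (j-1) * ζ := by
    conv_lhs => rw [← hsucc, pow_succ]
  have hp0 : (0:ℝ) < ζ ^ (j-1) := by positivity
  have hkey : ((j:ℝ)+1) * ζ = (M:ℝ) * j := by
    rw [hpowsplit] at hderiv
    have : ζ ^ (j-1) * (((j:ℝ)+1) * ζ - (M:ℝ) * j) = 0 := by linear_combination hderiv
    rcases mul_eq_zero.mp this with h | h
    · linarith
    · linarith
  -- (j+1)*N = M * ζ^j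
  have hNval : ((j:ℝ)+1) * (N:ℝ) = (M:ℝ) * ζ ^ j := by
    have h1 : ζ ^ j * ((M:ℝ) - ζ) = (N:ℝ) := by linear_combination -hroot
    have h2 : ((j:ℝ)+1) * ((M:ℝ) - ζ) = (M:ℝ) := by linear_combination -hkey
    linear_combination (-(j:ℝ)-1) * h1 + ζ ^ j * h2
  have hpow : (j:ℝ) + 1 ≤ ζ ^ j := by
    have h2 : ((j:ℝ)) + 1 ≤ 2 ^ j := by
      have := Nat.lt_two_pow_self (n := j)
      exact_mod_cast this
    calc ((j:ℝ)) + 1 ≤ 2 ^ j := h2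
      _ ≤ ζ ^ j := pow_le_pow_left₀ (by norm_num) (by linarith) j
  nlinarith [hNval, hpow, hkey]

lemma prod_lt_one_aux (s : Multiset ℝ) (h : ∀ x ∈ s, 0 ≤ x ∧ x < 1) : s = 0 ∨ s.prod < 1 := by
  induction s using Multiset.induction_on with
  | empty => left; rfl
  | cons a t ih =>
    right
    have ha := h a (Multiset.mem_cons_self a t)
    have ht : ∀ x ∈ t, 0 ≤ x ∧ x < 1 := fun x hx => h x (Multiset.mem_cons_of_mem hx)
    rw [Multiset.prod_cons]
    rcases ih ht with h0 | hlt
    · rw [h0]; simpa using ha.2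
    · have htnn : 0 ≤ t.prod := Multiset.prod_nonneg (fun x hx => (ht x hx).1)
      nlinarith [ha.1, ha.2]


/-- For `k ≥ 2` and integers `M ≥ 3`, `1 ≤ N ≤ M − 2`, the polynomial
`Q(X) = X^k − M·X^{k−1} + N` has exactly one complex root of absolute value `≥ 1`; this root
is a real number `ζ > 1`, all other complex roots have absolute value `< 1`, `Q` is
irreducible over `ℚ`, and `ζ` is a Pisot number of degree `k` with minimal polynomial `Q`. -/
theorem pisot_polynomial_family (k : ℕ) (M N : ℤ) (hk : 2 ≤ k) (hM : 3 ≤ M)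
    (hN1 : 1 ≤ N) (hN2 : N ≤ M - 2) :
    ∃ ζ : ℝ, 1 < ζ ∧
      Polynomial.aeval ζ ((X : ℚ[X]) ^ k - C (M : ℚ) * X ^ (k - 1) + C (N : ℚ)) = 0 ∧
      (∀ z : ℂ, Polynomial.aeval z ((X : ℚ[X]) ^ k - C (M : ℚ) * X ^ (k - 1) + C (N : ℚ)) = 0 →
        z ≠ (ζ : ℂ) → ‖z‖ < 1) ∧
      Irreducible ((X : ℚ[X]) ^ k - C (M : ℚ) * X ^ (k - 1) + C (N : ℚ)) ∧
      minpoly ℚ ζ = (X : ℚ[X]) ^ k - C (M : ℚ) * X ^ (k - 1) + C (N : ℚ) ∧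
      IsPisot ζ ∧ (minpoly ℚ ζ).natDegree = k := by
  obtain ⟨j, rfl⟩ : ∃ j, k = j + 1 := ⟨k - 1, by omega⟩
  have hj : 1 ≤ j := by omega
  simp only [Nat.add_sub_cancel]
  obtain ⟨ζ, hz1, hz2, hzroot⟩ := zeta_exists M N hM hN1 hN2 j hj
  have hMr : (3:ℝ) ≤ (M:ℝ) := by exact_mod_cast hM
  have hζ1 : 1 < ζ := by linarith
  have hzc : (ζ:ℂ) ^ (j+1) - (M:ℂ) * (ζ:ℂ) ^ j + (N:ℂ) = 0 := by
    have := congrArg (fun x : ℝ => (x : ℂ)) hzroot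
    push_cast at this ⊢
    convert this using 2 <;> norm_cast
  have hzcabs : 1 ≤ ‖(ζ:ℂ)‖ := by
    rw [Complex.norm_of_nonneg (by linarith)]
    linarith
  set Qq : ℚ[X] := X ^ (j+1) - C (M:ℚ) * X ^ j + C (N:ℚ) with hQq
  have haevalC : ∀ z : ℂ, (Polynomial.aeval z) Qq = z^(j+1) - (M:ℂ)*z^j + (N:ℂ) := by
    intro z; simp [hQq]
  have hroots : ∀ z : ℂ, (aeval z) Qq = 0 → z ≠ (ζ:ℂ) → ‖z‖ < 1 := by
    intro z hz hne
    by_contra hge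
    push_neg at hge
    rw [haevalC z] at hz
    exact hne (root_unique M N hM hN1 hN2 j hj z (ζ:ℂ) hz hge hzc hzcabs)
  -- integer polynomial
  set Qz : ℤ[X] := X ^ (j+1) - C M * X ^ j + C N with hQz
  have hQzform : Qz = X ^ (j+1) + (C (-M) * X ^ j + C N) := by
    simp only [hQz, map_neg]; ring
  have hdegsmall : (C (-M) * X ^ j + C N).degree < ((j+1 : ℕ) : WithBot ℕ) := by
    apply lt_of_le_of_lt (degree_add_le _ _)
    apply max_lt
    · exact lt_of_le_of_lt (degree_C_mul_X_pow_le _ _) (by exact_mod_cast Nat.lt_succ_self j)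
    · exact lt_of_le_of_lt degree_C_le (by exact_mod_cast Nat.succ_pos j)
  have hQzmonic : Qz.Monic := by
    rw [hQzform]; exact monic_X_pow_add hdegsmall
  have hQzdeg : Qz.natDegree = j + 1 := by
    rw [hQzform]
    have h1 : ((C (-M) * X ^ j + C N)).degree < (X ^ (j+1) : ℤ[X]).degree := by
      rw [degree_X_pow]; exact hdegsmall
    have h2 : (X ^ (j+1) + (C (-M) * X ^ j + C N) : ℤ[X]).degree = ((j+1 : ℕ) : WithBot ℕ) := by
      rw [degree_add_eq_left_of_degree_lt h1, degree_X_pow]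
    exact natDegree_eq_of_degree_eq_some h2
  have haevalZ : (aeval ζ) Qz = 0 := by
    simp only [hQz, map_add, map_sub, map_pow, map_mul, aeval_X, aeval_C, algebraMap_int_eq, eq_intCast, map_intCast]
    push_cast
    linear_combination hzroot
  have hint : IsIntegral ℤ ζ := ⟨Qz, hQzmonic, by simpa [aeval_def] using haevalZ⟩
  obtain ⟨B, hB⟩ := minpoly.isIntegrallyClosed_dvd hint haevalZ
  have hAmonic : (minpoly ℤ ζ).Monic := minpoly.monic hint
  have hBmonic : B.Monic := hAmonic.of_mul_monic_left (hB ▸ hQzmonic)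
  -- ζ not a root of B
  have hBζ : (aeval ζ) B ≠ 0 := by
    intro h0
    apply simple_root M N hM hN1 hN2 j hj ζ hz1 hzroot
    have hd := congrArg (fun p => (aeval ζ) (derivative p)) hB
    simp only [derivative_mul, map_add, map_mul, minpoly.aeval, h0, zero_mul, mul_zero,
      add_zero] at hd
    rw [hQz] at hd
    simp only [derivative_add, derivative_sub, derivative_mul, derivative_C, derivative_X_pow,
      zero_mul, zero_add, map_add, map_sub, map_mul, map_pow, aeval_X, aeval_C,
      Nat.add_sub_cancel, map_natCast, algebraMap_int_eq, eq_intCast, map_intCast, derivative_intCast,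
      map_zero] at hd
    push_cast at hd
    linear_combination hd
  -- B = 1
  have hBone : B = 1 := by
    by_contra hne1
    have hdegB : 1 ≤ B.natDegree := by
      rcases Nat.eq_zero_or_pos B.natDegree with h0 | h1
      · exact absurd ((hBmonic.natDegree_eq_zero).mp h0) hne1
      · omega
    set Bc : ℂ[X] := B.map (algebraMap ℤ ℂ) with hBc
    have hBcmonic : Bc.Monic := hBmonic.map _
    have hBcsplits : Splits Bc := IsAlgClosed.splits Bc
    have hprod : Bc = (Bc.roots.map fun r => X - C r).prod :=
      hBcsplits.eq_prod_roots_of_monic hBcmonic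
    have hcard : Bc.roots.card = B.natDegree := by
      rw [(splits_iff_card_roots).mp hBcsplits, hBmonic.natDegree_map]
    -- each root is small
    have hsmall : ∀ r ∈ Bc.roots, ‖r‖ < 1 := by
      intro r hr
      have hrroot : Bc.eval r = 0 := by
        have := Polynomial.isRoot_of_mem_roots hr
        exact this
      have hQcr : Polynomial.eval r (Qz.map (algebraMap ℤ ℂ)) = 0 := by
        rw [hB, Polynomial.map_mul, eval_mul, hrroot, mul_zero]
      have hQcval : Polynomial.eval r (Qz.map (algebraMap ℤ ℂ))
          = r ^ (j+1) - (M:ℂ) * r ^ j + (N:ℂ) := by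
        simp [hQz, Polynomial.map_sub, Polynomial.map_add, Polynomial.map_pow,
          Polynomial.map_mul, Polynomial.map_C, Polynomial.map_X]
      have hQr : (aeval r) Qq = 0 := by
        rw [haevalC r, ← hQcval, hQcr]
      apply hroots r hQr
      intro hrz
      apply hBζ
      rw [hrz] at hrroot
      have h2 : (aeval ((ζ:ℝ):ℂ)) B = 0 := by
        rw [aeval_def, ← Polynomial.eval_map]
        exact hrroot
      rw [show ((ζ:ℝ):ℂ) = algebraMap ℝ ℂ ζ from rfl,
        Polynomial.aeval_algebraMap_apply ℂ ζ B] at h2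
      simpa using h2
    -- product of roots
    have habs : ‖Bc.eval 0‖ = (Bc.roots.map (fun r => ‖r‖)).prod := by
      calc ‖Bc.eval 0‖
          = ‖(Bc.roots.map (fun r => -r)).prod‖ := by
            conv_lhs => rw [hprod]
            rw [Polynomial.eval_multiset_prod, Multiset.map_map]
            congr 2
            apply Multiset.map_congr rfl
            intro r _
            simp
        _ = ((Bc.roots.map (fun r => -r)).map norm).prod := map_multiset_prod (normHom : ℂ →*₀ ℝ) _
        _ = (Bc.roots.map (fun r => ‖r‖)).prod := by
            rw [Multiset.map_map]
            congr 1
            apply Multiset.map_congr rfl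
            intro r _
            simp
    have hlt : (Bc.roots.map (fun r => ‖r‖)).prod < 1 := by
      have hhyp : ∀ x ∈ Bc.roots.map (fun r => ‖r‖), 0 ≤ x ∧ x < 1 := by
        intro x hx
        obtain ⟨r, hr, rfl⟩ := Multiset.mem_map.mp hx
        exact ⟨norm_nonneg r, hsmall r hr⟩
      rcases prod_lt_one_aux (Bc.roots.map (fun r => ‖r‖)) hhyp with h0 | h
      · exfalso
        rw [Multiset.map_eq_zero] at h0
        rw [h0] at hcard
        simp only [Multiset.card_zero] at hcard
        omega
      · exact h
    -- but |B(0)| ≥ 1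
    have hB0 : B.eval 0 ≠ 0 := by
      intro h0
      have hQ0 : Qz.eval 0 = N := by
        simp [hQz, zero_pow (by omega : j ≠ 0), zero_pow (by omega : j + 1 ≠ 0)]
      have heq : Qz.eval 0 = (minpoly ℤ ζ).eval 0 * B.eval 0 := by rw [hB, eval_mul]
      rw [hQ0, h0, mul_zero] at heq
      omega
    have hBc0 : ‖Bc.eval 0‖ = |(B.eval 0 : ℤ)| := by
      rw [hBc, Polynomial.eval_map, Polynomial.eval₂_at_zero]
      simp [Complex.norm_intCast, Polynomial.coeff_zero_eq_eval_zero]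
    have hge1 : (1:ℝ) ≤ ‖Bc.eval 0‖ := by
      rw [hBc0]
      have : 1 ≤ |B.eval 0| := Int.one_le_abs hB0
      exact_mod_cast this
    rw [habs] at hge1
    linarith
  rw [hBone, mul_one] at hB
  -- minpoly over ℚ
  have hmap : Qz.map (algebraMap ℤ ℚ) = Qq := by
    simp [hQz, hQq, Polynomial.map_sub, Polynomial.map_add, Polynomial.map_pow,
      Polynomial.map_mul, Polynomial.map_C, Polynomial.map_X]
  have hminQ : minpoly ℚ ζ = Qq := by
    rw [minpoly.isIntegrallyClosed_eq_field_fractions' ℚ hint, ← hB, hmap]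
  have hintQ : IsIntegral ℚ ζ := hint.tower_top
  have haevalR : (Polynomial.aeval ζ) Qq = 0 := by
    simp only [hQq, map_add, map_sub, map_pow, map_mul, aeval_X, aeval_C, algebraMap_int_eq, eq_intCast, map_intCast]
    push_cast
    linear_combination hzroot
  refine ⟨ζ, hζ1, haevalR, hroots, ?_, hminQ, ⟨hζ1, hint, ?_⟩, ?_⟩
  · rw [← hminQ]; exact minpoly.irreducible hintQ
  · intro z hz hne
    rw [hminQ] at hz
    exact hroots z hz hne
  · rw [hminQ, ← hmap, hQzmonic.natDegree_map, hQzdeg]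
end

section
/- Let ζ be a Pisot number of degree k ≥ 3. Then the sequence (σ_n(1,ζ))_{n≥1} is not ultimately constant; that is, there do not exist n₀ and a constant c ∈ (−∞,∞] with σ_n(1,ζ) = c for all n ≥ n₀. -/
open Filter Polynomial IntermediateField

lemma expsum_vanish (N : ℕ) : ∀ (G : Finset ℂ), (∀ g ∈ G, g ≠ 0) → ∀ (c : ℂ → ℂ),
    (∀ n, N ≤ n → ∑ g ∈ G, c g * g ^ n = 0) → ∀ g ∈ G, c g = 0 := by
  intro G
  induction G using Finset.induction_on with
  | empty => intro _ c _ g hg; simp at hg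
  | @insert a s ha ih =>
    intro h0 c hsum g hg
    have ha0 : a ≠ 0 := h0 a (Finset.mem_insert_self a s)
    have hs0 : ∀ g ∈ s, g ≠ 0 := fun g hg => h0 g (Finset.mem_insert_of_mem hg)
    have key : ∀ n, N ≤ n → ∑ g ∈ s, (c g * (g - a)) * g ^ n = 0 := by
      intro n hn
      have h1 := hsum (n+1) (le_trans hn (Nat.le_succ n))
      have h2 := hsum n hn
      rw [Finset.sum_insert ha] at h1 h2
      have h1' : ∑ g ∈ s, c g * g ^ (n+1) = -(c a * a ^ (n+1)) :=
        eq_neg_of_add_eq_zero_right h1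
      have h2' : ∑ g ∈ s, c g * g ^ n = -(c a * a ^ n) :=
        eq_neg_of_add_eq_zero_right h2
      have e : ∀ g ∈ s, (c g * (g - a)) * g ^ n = c g * g ^ (n+1) - a * (c g * g ^ n) := by
        intro g _; ring
      rw [Finset.sum_congr rfl e, Finset.sum_sub_distrib, ← Finset.mul_sum, h1', h2']
      ring
    have hszero : ∀ g ∈ s, c g * (g - a) = 0 := ih hs0 _ key
    have hcs : ∀ g ∈ s, c g = 0 := by
      intro g hgs
      have hne : g - a ≠ 0 := sub_ne_zero.mpr (by rintro rfl; exact ha hgs)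
      exact (mul_eq_zero.mp (hszero g hgs)).resolve_right hne
    rcases Finset.mem_insert.mp hg with rfl | hgs
    · have h2 := hsum N le_rfl
      rw [Finset.sum_insert ha, Finset.sum_eq_zero (fun g hgs => by rw [hcs g hgs, zero_mul]),
        add_zero] at h2
      exact (mul_eq_zero.mp h2).resolve_right (pow_ne_zero _ ha0)
    · exact hcs g hgs

lemma powersum_int (ζ : ℝ) (hζ : IsIntegral ℤ ζ) (n : ℕ) :
    ∃ m : ℤ, (m : ℂ) = ∑ ρ ∈ ((minpoly ℚ ζ).aroots ℂ).toFinset, ρ ^ n := by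
  have hζQ : IsIntegral ℚ ζ := hζ.tower_top
  haveI : FiniteDimensional ℚ ℚ⟮ζ⟯ := IntermediateField.adjoin.finiteDimensional hζQ
  set x : ℚ⟮ζ⟯ := IntermediateField.AdjoinSimple.gen ℚ ζ with hxdef
  have hx : IsIntegral ℤ x := by
    rw [← isIntegral_algebraMap_iff (algebraMap ℚ⟮ζ⟯ ℝ).injective]
    rwa [IntermediateField.AdjoinSimple.algebraMap_gen]
  have htr : IsIntegral ℤ (Algebra.trace ℚ ℚ⟮ζ⟯ (x ^ n)) := Algebra.isIntegral_trace (hx.pow n)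
  obtain ⟨m, hm⟩ := IsIntegrallyClosed.isIntegral_iff.mp htr
  refine ⟨m, ?_⟩
  have h1 : algebraMap ℚ ℂ (Algebra.trace ℚ ℚ⟮ζ⟯ (x ^ n)) = ∑ σ : ℚ⟮ζ⟯ →ₐ[ℚ] ℂ, σ (x ^ n) :=
    trace_eq_sum_embeddings (E := ℂ)
  have hnodup : (((minpoly ℚ ζ).aroots ℂ)).Nodup :=
    Polynomial.nodup_roots ((minpoly.irreducible hζQ).separable.map)
  set e : (ℚ⟮ζ⟯ →ₐ[ℚ] ℂ) ≃ { z // z ∈ (minpoly ℚ ζ).aroots ℂ } :=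
    IntermediateField.algHomAdjoinIntegralEquiv ℚ (K := ℂ) hζQ with hedef
  have hσ : ∀ σ : ℚ⟮ζ⟯ →ₐ[ℚ] ℂ, σ x = (e σ : ℂ) := by
    intro σ
    conv_lhs => rw [← e.symm_apply_apply σ]
    exact IntermediateField.algHomAdjoinIntegralEquiv_symm_apply_gen ℚ hζQ (e σ)
  set Rf := ((minpoly ℚ ζ).aroots ℂ).toFinset with hRf
  set e2 : { z // z ∈ (minpoly ℚ ζ).aroots ℂ } ≃ {z // z ∈ Rf} :=
    Equiv.subtypeEquivRight (fun z => (Multiset.mem_toFinset).symm) with he2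
  have h2 : ∑ σ : ℚ⟮ζ⟯ →ₐ[ℚ] ℂ, σ (x ^ n) = ∑ z : {z // z ∈ Rf}, (z : ℂ) ^ n := by
    refine Fintype.sum_equiv (e.trans e2) _ _ (fun σ => ?_)
    rw [map_pow, hσ σ]; rw [he2]; simp [Equiv.subtypeEquivRight]; rfl
  have h3 : ∑ z : {z // z ∈ Rf}, (z : ℂ) ^ n = ∑ ρ ∈ Rf, ρ ^ n :=
    Finset.sum_coe_sort Rf (fun ρ => ρ ^ n)
  have : ((m : ℚ) : ℂ) = ∑ ρ ∈ Rf, ρ ^ n := by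
    rw [show ((m : ℚ) : ℂ) = algebraMap ℚ ℂ ((algebraMap ℤ ℚ) m) by
      rw [eq_intCast (algebraMap ℤ ℚ) m, map_intCast, Rat.cast_intCast], hm, h1, h2, h3]
  rw [← this, Rat.cast_intCast]

/-- For a Pisot number `ζ` of degree `k ≥ 3`, the sequence `(σ_n(1,ζ))` is not
ultimately constant. -/
theorem pisot_deg_ge_three_not_eventually_const (ζ : ℝ) (k : ℕ) (hP : IsPisot ζ)
    (hk : 3 ≤ k) (hdeg : (minpoly ℚ ζ).natDegree = k) :
    ¬ ∃ (n₀ : ℕ) (c : EReal), ∀ n ≥ n₀, sigmaFn 1 ζ n = c := by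
  rintro ⟨n₀, c, hc⟩
  have hζ1 : 1 < ζ := hP.1
  have hζ0 : (0:ℝ) < ζ := lt_trans one_pos hζ1
  have hζQ : IsIntegral ℚ ζ := hP.2.1.tower_top
  -- Case c = ⊤ : ζ would be rational
  by_cases hctop : c = ⊤
  · subst hctop
    have hint : ∀ n, n₀ ≤ n → ∃ m : ℤ, 1 * ζ ^ n = (m : ℝ) := by
      intro n hn
      by_contra h
      have := hc n hn
      rw [sigmaFn, if_neg h] at this
      exact EReal.coe_ne_top _ this
    obtain ⟨a, ha⟩ := hint (n₀ + 1) (by omega)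
    obtain ⟨b, hb⟩ := hint (n₀ + 2) (by omega)
    rw [one_mul] at ha hb
    have hap : (0:ℝ) < (a:ℝ) := ha ▸ pow_pos hζ0 _
    have ha0 : (a:ℚ) ≠ 0 := by exact_mod_cast ne_of_gt (by exact_mod_cast hap)
    have hq : algebraMap ℚ ℝ ((b : ℚ) / (a : ℚ)) = ζ := by
      have hb' : (b : ℝ) = (a : ℝ) * ζ := by
        rw [← ha, ← hb, pow_succ]
      rw [show algebraMap ℚ ℝ ((b:ℚ)/(a:ℚ)) = (b:ℝ)/(a:ℝ) by push_cast [map_div₀]; norm_num]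
      rw [hb']
      field_simp
    have h1 : (minpoly ℚ ζ).natDegree = 1 := by
      rw [← hq, minpoly.eq_X_sub_C, natDegree_X_sub_C]
    omega
  -- Main case
  have hnoint : ∀ n, n₀ ≤ n → ¬ ∃ m : ℤ, 1 * ζ ^ n = (m : ℝ) := by
    intro n hn h
    have := hc n hn
    rw [sigmaFn, if_pos h] at this
    exact hctop this.symm
  have hval : ∀ n, n₀ ≤ n →
      ((-(Real.log (nearestDist (1 * ζ ^ n)) / (n * Real.log ζ)) : ℝ) : EReal) = c := by
    intro n hn
    rw [← hc n hn, sigmaFn, if_neg (hnoint n hn)]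
  set N1 := max n₀ 1 with hN1
  set c' : ℝ := -(Real.log (nearestDist (1 * ζ ^ N1)) / (N1 * Real.log ζ)) with hc'
  have hcc : c = (c' : EReal) := (hval N1 (le_max_left _ _)).symm
  have hlogζ : 0 < Real.log ζ := Real.log_pos hζ1
  set t : ℝ := Real.exp (-c' * Real.log ζ) with ht
  have ht0 : 0 < t := Real.exp_pos _
  have hd : ∀ n, N1 ≤ n → nearestDist (ζ ^ n) = t ^ n := by
    intro n hn
    have hn0 : n₀ ≤ n := le_trans (le_max_left _ _) hn
    have hn1 : 1 ≤ n := le_trans (le_max_right _ _) hn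
    have h1 : (-(Real.log (nearestDist (1 * ζ ^ n)) / (n * Real.log ζ)) : ℝ) = c' := by
      have := (hval n hn0).trans hcc
      exact_mod_cast this
    have hdpos : 0 < nearestDist (1 * ζ ^ n) := by
      rcases lt_or_eq_of_le (abs_nonneg (1 * ζ ^ n - round (1 * ζ ^ n))) with h | h
      · exact h
      · exfalso
        apply hnoint n hn0
        refine ⟨round (1 * ζ ^ n), ?_⟩
        have := abs_eq_zero.mp h.symm
        linarith [this]
    rw [one_mul] at h1 hdpos
    have hne : ((n:ℝ) * Real.log ζ) ≠ 0 := by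
      apply mul_ne_zero
      · have hpos : (0:ℝ) < (n:ℝ) := by exact_mod_cast (by omega : 0 < n)
        exact ne_of_gt hpos
      · exact ne_of_gt hlogζ
    have hlog : Real.log (nearestDist (ζ ^ n)) = (-c') * ((n:ℝ) * Real.log ζ) := by
      have h2 : Real.log (nearestDist (ζ ^ n)) / ((n:ℝ) * Real.log ζ) = -c' := by
        rw [← neg_neg (Real.log (nearestDist (ζ ^ n)) / (↑n * Real.log ζ)), h1]
      rw [div_eq_iff hne] at h2
      linarith [h2]
    rw [← Real.exp_log hdpos, hlog,
      show (-c') * ((n:ℝ) * Real.log ζ) = (n:ℝ) * (-c' * Real.log ζ) by ring,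
      Real.exp_nat_mul]
  -- roots setup
  set p := minpoly ℚ ζ with hpdef
  have hpne : p ≠ 0 := minpoly.ne_zero hζQ
  have hsep : p.Separable := (minpoly.irreducible hζQ).separable
  have hnodup : (p.aroots ℂ).Nodup := by rw [aroots_def]; exact nodup_roots hsep.map
  set Rf : Finset ℂ := (p.aroots ℂ).toFinset with hRfdef
  have hRcard : Rf.card = k := by
    rw [Multiset.toFinset_card_of_nodup hnodup, ← hdeg, hpdef]
    have := (IsAlgClosed.splits (p.map (algebraMap ℚ ℂ))).natDegree_eq_card_roots
    rw [natDegree_map] at this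
    exact this.symm
  have hζmem : (ζ : ℂ) ∈ Rf := by
    rw [Multiset.mem_toFinset, mem_aroots]
    refine ⟨hpne, ?_⟩
    have h0 : aeval ζ p = 0 := minpoly.aeval ℚ ζ
    have : aeval ((algebraMap ℝ ℂ) ζ) p = algebraMap ℝ ℂ (aeval ζ p) :=
      aeval_algebraMap_apply ℂ ζ p
    rw [h0, map_zero] at this
    exact this
  have hroot0 : (0:ℂ) ∉ Rf := by
    intro h0
    rw [Multiset.mem_toFinset, mem_aroots] at h0
    have := h0.2
    rw [show ((0:ℂ)) = algebraMap ℝ ℂ 0 by simp, aeval_algebraMap_apply] at this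
    have h2 : aeval (0:ℝ) p = 0 := by
      have := (map_eq_zero_iff _ (algebraMap ℝ ℂ).injective).mp this
      exact this
    rw [show aeval (0:ℝ) p = algebraMap ℚ ℝ (p.coeff 0) by
      rw [aeval_def, eval₂_at_zero]] at h2
    have hc0 : p.coeff 0 = 0 := by
      exact (map_eq_zero_iff _ (algebraMap ℚ ℝ).injective).mp h2
    have hXdvd : X ∣ p := X_dvd_iff.mpr hc0
    obtain ⟨q, hq⟩ := hXdvd
    rcases (minpoly.irreducible hζQ).isUnit_or_isUnit hq with h | h
    · exact Polynomial.not_isUnit_X h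
    · have : p.natDegree = 1 := by
        rw [hq, natDegree_mul X_ne_zero (fun h0 => by simp [h0, mul_zero] at hq; exact hpne hq),
          natDegree_X, Polynomial.natDegree_eq_zero_of_isUnit h]
      omega
  set Bf : Finset ℂ := Rf.erase (ζ : ℂ) with hBfdef
  have hBcard : Bf.card = k - 1 := by rw [hBfdef, Finset.card_erase_of_mem hζmem, hRcard]
  have hBlt : ∀ β ∈ Bf, ‖β‖ < 1 := by
    intro β hβ
    have hβR : β ∈ Rf := Finset.mem_of_mem_erase hβ
    have hβne : β ≠ (ζ:ℂ) := Finset.ne_of_mem_erase hβ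
    rw [Multiset.mem_toFinset, mem_aroots] at hβR
    exact hP.2.2 β hβR.2 hβne
  have hB0 : ∀ β ∈ Bf, β ≠ 0 := fun β hβ h0 =>
    hroot0 (h0 ▸ Finset.mem_of_mem_erase hβ)
  -- integer power sums
  have hm : ∀ n : ℕ, ∃ m : ℤ, (m : ℂ) = ∑ ρ ∈ Rf, ρ ^ n := powersum_int ζ hP.2.1
  choose A hA using hm
  have hsplitsum : ∀ n : ℕ, (∑ β ∈ Bf, β ^ n) = (A n : ℂ) - (ζ:ℂ) ^ n := by
    intro n
    have := Finset.add_sum_erase Rf (fun ρ => ρ ^ n) hζmem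
    rw [← hA n] at this
    rw [hBfdef]
    linear_combination this
  set sR : ℕ → ℝ := fun n => (A n : ℝ) - ζ ^ n with hsR
  have hsRC : ∀ n, ((sR n : ℝ) : ℂ) = ∑ β ∈ Bf, β ^ n := by
    intro n
    rw [hsplitsum n, hsR]
    push_cast
    ring
  -- decay
  have hdecay : Tendsto (fun n => ∑ β ∈ Bf, ‖β‖ ^ n) atTop (nhds 0) := by
    have h0 : ∀ β ∈ Bf, Tendsto (fun n => ‖β‖ ^ n) atTop (nhds 0) := fun β hβ =>
      tendsto_pow_atTop_nhds_zero_of_lt_one (norm_nonneg β) (hBlt β hβ)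
    have := tendsto_finset_sum Bf (fun β hβ => h0 β hβ)
    simpa using this
  have habs : ∀ n, |sR n| ≤ ∑ β ∈ Bf, ‖β‖ ^ n := by
    intro n
    rw [← Real.norm_eq_abs, ← Complex.norm_real, hsRC]
    refine le_trans (norm_sum_le _ _) ?_
    apply le_of_eq
    exact Finset.sum_congr rfl (fun β _ => norm_pow _ _)
  obtain ⟨N2, hN2⟩ := eventually_atTop.mp (hdecay.eventually (gt_mem_nhds (by norm_num : (0:ℝ) < 1/2)))
  set N := max N1 N2 with hN
  have key : ∀ n, N ≤ n → |sR n| = t ^ n := by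
    intro n hn
    have h2 : |sR n| < 1/2 := lt_of_le_of_lt (habs n) (hN2 n (le_trans (le_max_right _ _) hn))
    have h3 : |ζ ^ n - (A n : ℝ)| < 1/2 := by rw [abs_sub_comm]; exact h2
    have h4 := abs_sub_round (ζ ^ n)
    have h5 : |((round (ζ ^ n) : ℤ) : ℝ) - ((A n : ℤ) : ℝ)| < 1 := by
      calc |((round (ζ ^ n) : ℤ) : ℝ) - (A n : ℝ)|
          ≤ |((round (ζ ^ n) : ℤ) : ℝ) - ζ ^ n| + |ζ ^ n - (A n : ℝ)| := abs_sub_le _ _ _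
        _ < 1/2 + 1/2 := by rw [abs_sub_comm]; exact add_lt_add_of_le_of_lt h4 h3
        _ = 1 := by norm_num
    have h6 : round (ζ ^ n) = A n := by
      have habs' : |round (ζ ^ n) - A n| < 1 := by
        have : |((round (ζ ^ n) - A n : ℤ) : ℝ)| < 1 := by push_cast; exact h5
        exact_mod_cast this
      have := abs_lt.mp habs'
      omega
    rw [← hd n (le_trans (le_max_left _ _) hn), nearestDist, h6, abs_sub_comm]
  -- squares
  set T : ℂ := ((t^2 : ℝ) : ℂ) with hT
  have hT0 : T ≠ 0 := by
    rw [hT]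
    exact_mod_cast ne_of_gt (by positivity : (0:ℝ) < t^2)
  have hsq : ∀ n, N ≤ n → ((sR n : ℝ) : ℂ) ^ 2 = T ^ n := by
    intro n hn
    have h1 : (sR n) ^ 2 = (t ^ 2) ^ n := by
      rw [← sq_abs, key n hn, ← pow_mul, ← pow_mul, Nat.mul_comm]
    rw [hT]
    push_cast
    exact_mod_cast congrArg (fun x : ℝ => (x : ℂ)) h1
  -- exponential sum vanishing
  set s2 : Finset (ℂ × ℂ) := Bf ×ˢ Bf with hs2
  set P : Finset ℂ := s2.image (fun p => p.1 * p.2) with hPdef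
  set G : Finset ℂ := insert T P with hG
  classical
  set cf : ℂ → ℂ := fun g =>
    ((s2.filter (fun p => p.1 * p.2 = g)).card : ℂ) - (if g = T then 1 else 0) with hcf
  have hG0 : ∀ g ∈ G, g ≠ 0 := by
    intro g hg
    rcases Finset.mem_insert.mp hg with rfl | hgP
    · exact hT0
    · obtain ⟨q, hq, rfl⟩ := Finset.mem_image.mp hgP
      have hq' := Finset.mem_product.mp hq
      exact mul_ne_zero (hB0 _ hq'.1) (hB0 _ hq'.2)
  have hsum0 : ∀ n, N ≤ n → ∑ g ∈ G, cf g * g ^ n = 0 := by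
    intro n hn
    have e1 : ∑ g ∈ G, ((s2.filter (fun p => p.1 * p.2 = g)).card : ℂ) * g ^ n
        = ∑ q ∈ s2, (q.1 * q.2) ^ n := by
      rw [← Finset.sum_fiberwise_of_maps_to (g := fun q : ℂ × ℂ => q.1 * q.2)
        (fun q hq => Finset.mem_insert_of_mem (Finset.mem_image_of_mem _ hq))
        (fun q => (q.1 * q.2) ^ n)]
      refine Finset.sum_congr rfl (fun g _ => ?_)
      rw [Finset.sum_congr rfl (fun q hq => by
        rw [(Finset.mem_filter.mp hq).2]), Finset.sum_const, nsmul_eq_mul]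
    have e2 : ∑ q ∈ s2, (q.1 * q.2) ^ n = (∑ β ∈ Bf, β ^ n) ^ 2 := by
      rw [sq, Finset.sum_mul_sum, hs2, Finset.sum_product]
      exact Finset.sum_congr rfl (fun β _ => Finset.sum_congr rfl (fun γ _ => by simp [mul_pow]))
    have e3 : ∑ g ∈ G, (if g = T then (1:ℂ) else 0) * g ^ n = T ^ n := by
      rw [Finset.sum_congr rfl (fun g _ => show (if g = T then (1:ℂ) else 0) * g ^ n
          = if g = T then g ^ n else 0 by split_ifs with h <;> simp [h])]
      rw [Finset.sum_ite_eq' G T (fun g => g ^ n), if_pos (Finset.mem_insert_self T P)]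
    calc ∑ g ∈ G, cf g * g ^ n
        = ∑ g ∈ G, (((s2.filter (fun p => p.1 * p.2 = g)).card : ℂ) * g ^ n
            - (if g = T then (1:ℂ) else 0) * g ^ n) := by
          refine Finset.sum_congr rfl (fun g _ => ?_)
          rw [hcf]; ring
      _ = (∑ β ∈ Bf, β ^ n) ^ 2 - T ^ n := by
          rw [Finset.sum_sub_distrib, e1, e2, e3]
      _ = 0 := by rw [← hsRC n, hsq n hn, sub_self]
  have hzero := expsum_vanish N G hG0 cf hsum0
  have hprod : ∀ x ∈ Bf, ∀ y ∈ Bf, x * y = T := by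
    intro x hx y hy
    have hmem : (x, y) ∈ s2 := Finset.mem_product.mpr ⟨hx, hy⟩
    have hgP : x * y ∈ G := Finset.mem_insert_of_mem (Finset.mem_image_of_mem _ hmem)
    have h := hzero _ hgP
    by_contra hne
    simp only [hcf] at h
    rw [if_neg hne, sub_zero] at h
    have hcard0 : (s2.filter (fun p => p.1 * p.2 = x * y)).card = 0 := by exact_mod_cast h
    have : (x, y) ∈ s2.filter (fun p => p.1 * p.2 = x * y) :=
      Finset.mem_filter.mpr ⟨hmem, rfl⟩
    rw [Finset.card_eq_zero.mp hcard0] at this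
    exact absurd this (Finset.notMem_empty _)
  have hcard2 : 1 < Bf.card := by omega
  obtain ⟨x, hx, y, hy, hxy⟩ := Finset.one_lt_card.mp hcard2
  have h1 := hprod x hx x hx
  have h2 := hprod x hx y hy
  exact hxy (mul_left_cancel₀ (hB0 x hx) (h1.trans h2.symm))
end

section
/- Let α > 0 and ζ > 0 be real numbers such that α·ζ^n is an integer for infinitely many positive integers n. Then there exist positive integers L, M with ζ^L = M, and there exist a nonnegative integer g and integers A, B with B > 0 such that α = (A/B)·ζ^{−g}; in particular α ∈ ℚ(ζ). -/
open Filter Polynomial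

set_option maxHeartbeats 1000000 in
/-- If `α, ζ > 0` and `α·ζⁿ` is an integer for infinitely many positive
integers `n`, then `ζ = M^{1/L}` for positive integers `L, M`, and
`α = (A/B)·ζ^{−g}` for integers `A, B > 0` and `g ≥ 0`; in particular `α ∈ ℚ(ζ)`. -/
theorem integer_values_structure (α ζ : ℝ) (hα : 0 < α) (hζ : 0 < ζ)
    (h : ∀ N : ℕ, ∃ n : ℕ, N ≤ n ∧ 0 < n ∧ ∃ m : ℤ, α * ζ ^ n = (m : ℝ)) :
    (∃ L M : ℕ, 0 < L ∧ 0 < M ∧ ζ ^ L = (M : ℝ)) ∧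
    (∃ (g : ℕ) (A B : ℤ), 0 < B ∧ α = ((A : ℝ) / (B : ℝ)) * (ζ ^ g)⁻¹) ∧
    α ∈ IntermediateField.adjoin ℚ ({ζ} : Set ℝ) := by
  obtain ⟨n₁, -, hn₁pos, m₁, hm₁⟩ := h 1
  have hm₁R : (0:ℝ) < (m₁:ℝ) := hm₁ ▸ mul_pos hα (pow_pos hζ n₁)
  have hm₁pos : 0 < m₁ := by exact_mod_cast hm₁R
  -- base identity
  have base : ∀ n, n₁ ≤ n → ∀ m : ℤ, α * ζ ^ n = (m : ℝ) →
      ζ ^ (n - n₁) * (m₁ : ℝ) = (m : ℝ) := by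
    intro n hn m hm
    rw [← hm₁, ← hm, ← mul_assoc, mul_comm _ α, mul_assoc, ← pow_add,
      Nat.sub_add_cancel hn]
  have key : ∀ n, n₁ ≤ n → (∃ m : ℤ, α * ζ ^ n = (m : ℝ)) →
      ∃ r : ℚ, 0 < r ∧ ζ ^ (n - n₁) = (r : ℝ) := by
    rintro n hn ⟨m, hm⟩
    have hid := base n hn m hm
    have hmR : (0:ℝ) < (m:ℝ) := hm ▸ mul_pos hα (pow_pos hζ n)
    refine ⟨(m : ℚ) / (m₁ : ℚ), ?_, ?_⟩
    · apply div_pos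
      · exact_mod_cast hmR
      · exact_mod_cast hm₁R
    · push_cast
      rw [eq_div_iff hm₁R.ne']
      exact hid
  set T : Set ℕ := {k | 0 < k ∧ ∃ r : ℚ, 0 < r ∧ ζ ^ k = (r : ℝ)} with hT
  obtain ⟨n₂, hn₂ge, -, hm₂⟩ := h (n₁ + 1)
  obtain ⟨r₂, hr₂pos, hr₂⟩ := key n₂ (by omega) hm₂
  have hTne : T.Nonempty := ⟨n₂ - n₁, by omega, r₂, hr₂pos, hr₂⟩
  set L := sInf T with hLdef
  obtain ⟨hLpos, s, hspos, hs⟩ : L ∈ T := Nat.sInf_mem hTne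
  have hsR : (0:ℝ) < (s:ℝ) := by exact_mod_cast hspos
  have hdvd : ∀ k : ℕ, (∃ r : ℚ, 0 < r ∧ ζ ^ k = (r:ℝ)) → L ∣ k := by
    rintro k ⟨r, hrpos, hr⟩
    by_contra hnd
    have hmodpos : 0 < k % L :=
      Nat.pos_of_ne_zero fun h0 => hnd (Nat.dvd_of_mod_eq_zero h0)
    have hmodlt : k % L < L := Nat.mod_lt _ hLpos
    have hsk : (0:ℚ) < s ^ (k / L) := pow_pos hspos _
    have hmem : k % L ∈ T := by
      refine ⟨hmodpos, r / s ^ (k / L), div_pos hrpos hsk, ?_⟩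
      have h1 : ζ ^ (L * (k / L)) * ζ ^ (k % L) = ζ ^ k := by
        rw [← pow_add, Nat.div_add_mod]
      push_cast
      rw [eq_div_iff (by positivity)]
      calc ζ ^ (k % L) * (s:ℝ) ^ (k / L)
          = ζ ^ (L * (k / L)) * ζ ^ (k % L) := by rw [pow_mul, hs]; ring
        _ = ζ ^ k := h1
        _ = (r:ℝ) := hr
    exact absurd (Nat.sInf_le hmem) (by omega)
  have hden : s.den = 1 := by
    by_contra hden1
    have h2 : 2 ≤ s.den := by have := s.den_pos; omega
    obtain ⟨n, hnge, -, m, hm⟩ := h (n₁ + L * (m₁.toNat + 1))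
    have hn₁le : n₁ ≤ n := by omega
    obtain ⟨r, hrpos, hr⟩ := key n hn₁le ⟨m, hm⟩
    obtain ⟨k, hk⟩ := hdvd (n - n₁) ⟨r, hrpos, hr⟩
    have hkge : m₁.toNat + 1 ≤ k := by
      have h1 : L * (m₁.toNat + 1) ≤ n - n₁ := by omega
      rw [hk] at h1
      exact Nat.le_of_mul_le_mul_left h1 hLpos
    have hreal : (s:ℝ) ^ k * (m₁:ℝ) = (m:ℝ) := by
      rw [← hs, ← pow_mul, ← hk]
      exact base n hn₁le m hm
    have hrat : (s : ℚ) ^ k * (m₁ : ℚ) = (m : ℚ) := by exact_mod_cast hreal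
    have hdQ : ((s.den : ℚ)) ≠ 0 := by exact_mod_cast s.den_pos.ne'
    have h' : ((s.num : ℚ) / (s.den:ℚ)) ^ k * (m₁:ℚ) = (m:ℚ) := by
      rw [Rat.num_div_den]; exact hrat
    have hint : s.num ^ k * m₁ = m * (s.den : ℤ) ^ k := by
      rw [div_pow, div_mul_eq_mul_div, div_eq_iff (pow_ne_zero _ hdQ)] at h'
      exact_mod_cast h'
    have hcop : IsCoprime ((s.den:ℤ)) s.num := by
      rw [Int.isCoprime_iff_gcd_eq_one, Int.gcd]
      exact s.reduced.symm
    have hdvdm : ((s.den:ℤ)) ^ k ∣ m₁ := by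
      have hd : ((s.den:ℤ)) ^ k ∣ s.num ^ k * m₁ := ⟨m, by linarith [hint]⟩
      exact (hcop.pow).dvd_of_dvd_mul_left hd
    have hle : ((s.den:ℤ)) ^ k ≤ m₁ := Int.le_of_dvd hm₁pos hdvdm
    have hlt : (m₁:ℤ) < ((s.den:ℤ)) ^ k := by
      have h1 : m₁.toNat < 2 ^ k := by
        calc m₁.toNat < 2 ^ m₁.toNat := Nat.lt_two_pow_self
          _ ≤ 2 ^ k := Nat.pow_le_pow_right (by norm_num) (by omega)
      have h2' : (2:ℤ) ^ k ≤ ((s.den:ℤ)) ^ k :=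
        pow_le_pow_left₀ (by norm_num) (by exact_mod_cast h2) k
      have hmn : (m₁.toNat : ℤ) = m₁ := Int.toNat_of_nonneg hm₁pos.le
      have h3 : (m₁ : ℤ) < 2 ^ k := by rw [← hmn]; exact_mod_cast h1
      linarith
    linarith
  have hnum : 0 < s.num := Rat.num_pos.mpr hspos
  have hM : ζ ^ L = ((s.num.toNat : ℕ) : ℝ) := by
    have hsint : (s.num : ℚ) = s := by
      rw [← Rat.num_div_den s, hden]; norm_num
    have htn : ((s.num.toNat : ℕ) : ℤ) = s.num := Int.toNat_of_nonneg hnum.le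
    have h3 : ((s.num.toNat : ℕ) : ℚ) = s := by
      rw [← hsint]; exact_mod_cast htn
    rw [hs]
    exact_mod_cast h3.symm
  have hα' : α = (m₁ : ℝ) * (ζ ^ n₁)⁻¹ := by
    rw [eq_mul_inv_iff_mul_eq₀ (pow_pos hζ n₁).ne']; exact hm₁
  refine ⟨⟨L, s.num.toNat, hLpos, ?_, hM⟩, ⟨n₁, m₁, 1, one_pos, ?_⟩, ?_⟩
  · omega
  · rw [Int.cast_one, div_one]; exact hα'
  · rw [hα']
    have hζm : ζ ∈ IntermediateField.adjoin ℚ ({ζ} : Set ℝ) :=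
      IntermediateField.subset_adjoin ℚ _ rfl
    have h1 : (m₁ : ℝ) ∈ IntermediateField.adjoin ℚ ({ζ} : Set ℝ) :=
      intCast_mem _ m₁
    have h2 : (ζ ^ n₁)⁻¹ ∈ IntermediateField.adjoin ℚ ({ζ} : Set ℝ) :=
      inv_mem (pow_mem hζm n₁)
    exact mul_mem h1 h2
end

section
/- For every real ζ > 1 and all real numbers a < b, the set { α ∈ (a,b) : σ̄(α,ζ) = ∞ } has the cardinality of the continuum; in particular { α ∈ ℝ : σ̄(α,ζ) = ∞ } is dense in ℝ. -/
open Filter Polynomial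

lemma sigmaFn_ge (ζ : ℝ) (hζ : 1 < ζ) (α : ℝ) (k n : ℕ) (hn : 1 ≤ n)
    (h : nearestDist (α * ζ ^ n) ≤ (ζ ^ ((k + 1) * n))⁻¹) :
    ((k : ℝ) : EReal) ≤ sigmaFn α ζ n := by
  unfold sigmaFn
  split_ifs with hint
  · exact le_top
  · rw [EReal.coe_le_coe_iff]
    have hζ0 : (0 : ℝ) < ζ := lt_trans one_pos hζ
    have hlogζ : 0 < Real.log ζ := Real.log_pos hζ
    have hn0 : (0 : ℝ) < (n : ℝ) := by exact_mod_cast hn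
    have hd0 : 0 < nearestDist (α * ζ ^ n) := by
      unfold nearestDist
      rw [abs_pos, sub_ne_zero]
      intro he
      exact hint ⟨round (α * ζ ^ n), he⟩
    have hlog : Real.log (nearestDist (α * ζ ^ n)) ≤ -(((k + 1) * n : ℕ) * Real.log ζ) := by
      have := Real.log_le_log hd0 h
      rwa [Real.log_inv, Real.log_pow] at this
    push_cast at hlog
    have h2 : (k : ℝ) * ((n : ℝ) * Real.log ζ) ≤ -Real.log (nearestDist (α * ζ ^ n)) := by
      nlinarith
    have hnl : 0 < (n : ℝ) * Real.log ζ := mul_pos hn0 hlogζ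
    rw [← neg_div, le_div_iff₀ hnl]
    exact h2

structure ChildData (ζ c r : ℝ) (k : ℕ) where
  c0 : ℝ
  c1 : ℝ
  rr : ℝ
  pos : 0 < rr
  disj : c0 + rr < c1 - rr
  sub0 : Set.Icc (c0 - rr) (c0 + rr) ⊆ Set.Icc (c - r) (c + r)
  sub1 : Set.Icc (c1 - rr) (c1 + rr) ⊆ Set.Icc (c - r) (c + r)
  sig : ∀ α, α ∈ Set.Icc (c0 - rr) (c0 + rr) ∪ Set.Icc (c1 - rr) (c1 + rr) →
      ∃ n : ℕ, k ≤ n ∧ ((k : ℝ) : EReal) ≤ sigmaFn α ζ n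

lemma childData_nonempty (ζ : ℝ) (hζ : 1 < ζ) (c r : ℝ) (hr : 0 < r) (k : ℕ) :
    Nonempty (ChildData ζ c r k) := by
  have hζ0 : (0 : ℝ) < ζ := lt_trans one_pos hζ
  obtain ⟨N, hN⟩ := Filter.eventually_atTop.1
    ((tendsto_pow_atTop_atTop_of_one_lt hζ).eventually_ge_atTop (4 / r))
  set n := max N (max 1 k) with hn
  have hn1 : 1 ≤ n := le_max_of_le_right (le_max_left _ _)
  have hnk : k ≤ n := le_max_of_le_right (le_max_right _ _)
  have h4 : 4 / r ≤ ζ ^ n := hN n (le_max_left _ _)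
  have hp : (0 : ℝ) < ζ ^ n := pow_pos hζ0 n
  set ε := (ζ ^ n)⁻¹ with hεdef
  have hε0 : 0 < ε := inv_pos.2 hp
  have hεr : ε ≤ r / 4 := by
    rw [hεdef, inv_le_comm₀ hp (by positivity), inv_div]
    exact h4
  set m0 := ⌈(c - r / 2) * ζ ^ n⌉ with hm0
  set c0 := (m0 : ℝ) * ε with hc0
  set c1 := ((m0 : ℝ) + 1) * ε with hc1
  set rr := min ((ζ ^ ((k + 2) * n))⁻¹) (ε / 4) with hrr
  have hq : (0 : ℝ) < ζ ^ ((k + 2) * n) := pow_pos hζ0 _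
  have hrr0 : 0 < rr := lt_min (inv_pos.2 hq) (by linarith)
  have hrrε : rr ≤ ε / 4 := min_le_right _ _
  have hmul : ζ ^ n * ε = 1 := mul_inv_cancel₀ hp.ne'
  have f1 : (c - r / 2) * ζ ^ n ≤ (m0 : ℝ) := Int.le_ceil _
  have f2 : (m0 : ℝ) < (c - r / 2) * ζ ^ n + 1 := Int.ceil_lt_add_one _
  have hc0l : c - r / 2 ≤ c0 := by
    rw [hc0, hεdef, ← div_eq_mul_inv]
    exact (le_div_iff₀ hp).2 f1
  have hc0u : c0 < c - r / 2 + ε := by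
    have h := mul_lt_mul_of_pos_right f2 hε0
    calc c0 = (m0 : ℝ) * ε := hc0
      _ < ((c - r / 2) * ζ ^ n + 1) * ε := h
      _ = c - r / 2 + ε := by rw [add_mul, one_mul, mul_assoc, hmul, mul_one]
  have hc1e : c1 = c0 + ε := by rw [hc1, hc0, add_mul, one_mul]
  refine ⟨⟨c0, c1, rr, hrr0, by linarith, ?_, ?_, ?_⟩⟩
  · intro x hx
    obtain ⟨hx1, hx2⟩ := Set.mem_Icc.1 hx
    exact Set.mem_Icc.2 ⟨by linarith, by linarith⟩
  · intro x hx
    obtain ⟨hx1, hx2⟩ := Set.mem_Icc.1 hx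
    exact Set.mem_Icc.2 ⟨by linarith, by linarith⟩
  · intro α hα
    refine ⟨n, hnk, ?_⟩
    have main : ∀ m : ℤ, |α - (m : ℝ) * ε| ≤ rr →
        nearestDist (α * ζ ^ n) ≤ (ζ ^ ((k + 1) * n))⁻¹ := by
      intro m hm
      have h1 : nearestDist (α * ζ ^ n) ≤ |α * ζ ^ n - (m : ℝ)| := nearestDist_le_int _ m
      have h2 : α * ζ ^ n - (m : ℝ) = (α - (m : ℝ) * ε) * ζ ^ n := by
        have : (m : ℝ) * ε * ζ ^ n = (m : ℝ) := by
          rw [mul_assoc, mul_comm ε, hmul, mul_one]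
        rw [sub_mul, this]
      have h3 : |α * ζ ^ n - (m : ℝ)| = |α - (m : ℝ) * ε| * ζ ^ n := by
        rw [h2, abs_mul, abs_of_pos hp]
      have h5 : (ζ ^ ((k + 2) * n))⁻¹ * ζ ^ n = (ζ ^ ((k + 1) * n))⁻¹ := by
        have he : (k + 2) * n = (k + 1) * n + n := by ring
        rw [he, pow_add, mul_inv, mul_assoc, inv_mul_cancel₀ hp.ne', mul_one]
      calc nearestDist (α * ζ ^ n) ≤ |α * ζ ^ n - (m : ℝ)| := h1
        _ = |α - (m : ℝ) * ε| * ζ ^ n := h3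
        _ ≤ rr * ζ ^ n := mul_le_mul_of_nonneg_right hm hp.le
        _ ≤ (ζ ^ ((k + 2) * n))⁻¹ * ζ ^ n :=
            mul_le_mul_of_nonneg_right (min_le_left _ _) hp.le
        _ = (ζ ^ ((k + 1) * n))⁻¹ := h5
    rcases hα with hα | hα
    · obtain ⟨hx1, hx2⟩ := Set.mem_Icc.1 hα
      refine sigmaFn_ge ζ hζ α k n hn1 (main m0 (abs_le.2 ⟨by linarith, by linarith⟩))
    · obtain ⟨hx1, hx2⟩ := Set.mem_Icc.1 hα
      refine sigmaFn_ge ζ hζ α k n hn1 (main (m0 + 1) (abs_le.2 ⟨?_, ?_⟩)) <;>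
        · push_cast
          rw [← hc1]
          linarith

noncomputable def childOf (ζ : ℝ) (hζ : 1 < ζ) (c r : ℝ) (hr : 0 < r) (k : ℕ) :
    ChildData ζ c r k :=
  (childData_nonempty ζ hζ c r hr k).some

/-- The interval associated to a (center, radius) pair. -/
def Iv (p : {q : ℝ × ℝ // 0 < q.2}) : Set ℝ := Set.Icc (p.1.1 - p.1.2) (p.1.1 + p.1.2)

noncomputable def step (ζ : ℝ) (hζ : 1 < ζ) (p : {q : ℝ × ℝ // 0 < q.2}) (k : ℕ) (b : Bool) :
    {q : ℝ × ℝ // 0 < q.2} :=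
  ⟨(cond b (childOf ζ hζ p.1.1 p.1.2 p.2 k).c1 (childOf ζ hζ p.1.1 p.1.2 p.2 k).c0,
    (childOf ζ hζ p.1.1 p.1.2 p.2 k).rr), (childOf ζ hζ p.1.1 p.1.2 p.2 k).pos⟩

lemma step_subset (ζ : ℝ) (hζ : 1 < ζ) (p : {q : ℝ × ℝ // 0 < q.2}) (k : ℕ) (b : Bool) :
    Iv (step ζ hζ p k b) ⊆ Iv p := by
  cases b
  · exact (childOf ζ hζ p.1.1 p.1.2 p.2 k).sub0
  · exact (childOf ζ hζ p.1.1 p.1.2 p.2 k).sub1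

lemma step_disj (ζ : ℝ) (hζ : 1 < ζ) (p : {q : ℝ × ℝ // 0 < q.2}) (k : ℕ) (x : ℝ)
    (h0 : x ∈ Iv (step ζ hζ p k false)) (h1 : x ∈ Iv (step ζ hζ p k true)) : False := by
  have hd := (childOf ζ hζ p.1.1 p.1.2 p.2 k).disj
  obtain ⟨ha, hb⟩ := h0
  obtain ⟨hc, he⟩ := h1
  simp only [step, Iv, cond] at ha hb hc he
  linarith

lemma step_sig (ζ : ℝ) (hζ : 1 < ζ) (p : {q : ℝ × ℝ // 0 < q.2}) (k : ℕ) (b : Bool) (α : ℝ)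
    (h : α ∈ Iv (step ζ hζ p k b)) : ∃ n : ℕ, k ≤ n ∧ ((k : ℝ) : EReal) ≤ sigmaFn α ζ n := by
  apply (childOf ζ hζ p.1.1 p.1.2 p.2 k).sig
  cases b
  · exact Set.mem_union_left _ h
  · exact Set.mem_union_right _ h

noncomputable def node (ζ : ℝ) (hζ : 1 < ζ) (c r : ℝ) (hr : 0 < r) :
    List Bool → {q : ℝ × ℝ // 0 < q.2}
  | [] => ⟨(c, r), hr⟩
  | b :: s => step ζ hζ (node ζ hζ c r hr s) s.length b

def pre (u : ℕ → Bool) : ℕ → List Bool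
  | 0 => []
  | k + 1 => u k :: pre u k

lemma pre_length (u : ℕ → Bool) : ∀ k, (pre u k).length = k
  | 0 => rfl
  | k + 1 => by simp [pre, pre_length u k]

lemma pre_eq (u v : ℕ → Bool) : ∀ k, (∀ i < k, u i = v i) → pre u k = pre v k
  | 0, _ => rfl
  | k + 1, h => by
    simp only [pre]
    rw [h k (Nat.lt_succ_self k), pre_eq u v k (fun i hi => h i (Nat.lt_succ_of_lt hi))]

lemma Iv_nonempty (p : {q : ℝ × ℝ // 0 < q.2}) : (Iv p).Nonempty :=
  ⟨p.1.1, Set.mem_Icc.2 ⟨by linarith [p.2], by linarith [p.2]⟩⟩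

lemma main_ab (ζ : ℝ) (hζ : 1 < ζ) (a b : ℝ) (hab : a < b) :
    Cardinal.mk {α : ℝ | α ∈ Set.Ioo a b ∧ sigmaUpper α ζ = ⊤} = Cardinal.continuum := by
  set c : ℝ := (a + b) / 2 with hcdef
  set r : ℝ := (b - a) / 4 with hrdef
  have hr : 0 < r := by rw [hrdef]; linarith
  set V : (ℕ → Bool) → ℕ → Set ℝ := fun u k => Iv (node ζ hζ c r hr (pre u k)) with hVdef
  have hVsub : ∀ u k, V u (k + 1) ⊆ V u k := by
    intro u k
    simp only [hVdef, pre, node]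
    exact step_subset ζ hζ _ _ _
  have hne : ∀ u, (⋂ k, V u k).Nonempty := by
    intro u
    apply IsCompact.nonempty_iInter_of_sequence_nonempty_isCompact_isClosed
    · exact hVsub u
    · intro k; exact Iv_nonempty _
    · exact isCompact_Icc
    · intro k; exact isClosed_Icc
  choose f hf using hne
  have hfk : ∀ u k, f u ∈ V u k := fun u k => Set.mem_iInter.1 (hf u) k
  have hIoo : ∀ u, f u ∈ Set.Ioo a b := by
    intro u
    have h0 : f u ∈ Set.Icc (c - r) (c + r) := hfk u 0
    obtain ⟨h1, h2⟩ := h0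
    exact Set.mem_Ioo.2 ⟨by rw [hcdef, hrdef] at h1; linarith,
      by rw [hcdef, hrdef] at h2; linarith⟩
  have htop : ∀ u, sigmaUpper (f u) ζ = ⊤ := by
    intro u
    rw [sigmaUpper, EReal.eq_top_iff_forall_lt]
    intro y
    obtain ⟨M, hM⟩ := exists_nat_gt y
    have hle : ((M : ℝ) : EReal) ≤ Filter.limsup (sigmaFn (f u) ζ) Filter.atTop := by
      apply le_limsup_of_frequently_le (hu_le := Filter.isBounded_le_of_top)
      rw [Filter.frequently_atTop]
      intro N
      have hmem : f u ∈ V u (max M N + 1) := hfk u (max M N + 1)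
      simp only [hVdef, pre, node] at hmem
      obtain ⟨n, hn1, hn2⟩ := step_sig ζ hζ _ _ _ _ hmem
      rw [pre_length] at hn1 hn2
      refine ⟨n, le_trans (le_max_right M N) hn1, ?_⟩
      refine le_trans ?_ hn2
      rw [EReal.coe_le_coe_iff]
      exact_mod_cast le_max_left M N
    refine lt_of_lt_of_le ?_ hle
    exact_mod_cast hM
  have hinj : Function.Injective f := by
    intro u v huv
    by_contra hne'
    have hex : ∃ k, u k ≠ v k := Function.ne_iff.1 hne'
    set k0 := Nat.find hex with hk0
    have hspec : u k0 ≠ v k0 := Nat.find_spec hex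
    have hpre : pre u k0 = pre v k0 :=
      pre_eq u v k0 (fun i hi => by
        by_contra h
        exact Nat.find_min hex hi h)
    have hu0 : f u ∈ V u (k0 + 1) := hfk u (k0 + 1)
    have hv0 : f v ∈ V v (k0 + 1) := hfk v (k0 + 1)
    simp only [hVdef, pre, node] at hu0 hv0
    rw [← hpre] at hv0
    rw [huv] at hu0
    cases hbu : u k0 <;> cases hbv : v k0
    · exact hspec (hbu.trans hbv.symm)
    · rw [hbu] at hu0; rw [hbv] at hv0
      exact step_disj ζ hζ _ _ _ hu0 hv0
    · rw [hbu] at hu0; rw [hbv] at hv0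
      exact step_disj ζ hζ _ _ _ hv0 hu0
    · exact hspec (hbu.trans hbv.symm)
  apply le_antisymm
  · exact (Cardinal.mk_set_le _).trans_eq Cardinal.mk_real
  · have hinj2 : Function.Injective (fun u : ℕ → Bool =>
        (⟨f u, hIoo u, htop u⟩ : {α : ℝ | α ∈ Set.Ioo a b ∧ sigmaUpper α ζ = ⊤})) := by
      intro u v h
      exact hinj (congrArg Subtype.val h)
    have hle := Cardinal.mk_le_of_injective hinj2
    have harrow : Cardinal.mk (ℕ → Bool) = Cardinal.continuum := by
      rw [Cardinal.mk_arrow, Cardinal.mk_bool, Cardinal.mk_nat, Cardinal.lift_id,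
        Cardinal.lift_id, Cardinal.two_power_aleph0]
    rwa [harrow] at hle


/-- For every real `ζ > 1` and all reals `a < b`, the set of `α ∈ (a,b)` with
`σ̄(α,ζ) = ∞` has the cardinality of the continuum; in particular `{α | σ̄(α,ζ) = ∞}` is
dense in `ℝ`. -/
theorem sigmaUpper_top_continuum_dense (ζ : ℝ) (hζ : 1 < ζ) :
    (∀ a b : ℝ, a < b →
      Cardinal.mk {α : ℝ | α ∈ Set.Ioo a b ∧ sigmaUpper α ζ = ⊤} = Cardinal.continuum) ∧
    Dense {α : ℝ | sigmaUpper α ζ = ⊤} := by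
  refine ⟨fun a b hab => main_ab ζ hζ a b hab, ?_⟩
  rw [dense_iff_inter_open]
  rintro U hU ⟨x, hx⟩
  obtain ⟨ε, hε, hball⟩ := Metric.isOpen_iff.1 hU x hx
  have hmk := main_ab ζ hζ (x - ε) (x + ε) (by linarith)
  have hne : {α : ℝ | α ∈ Set.Ioo (x - ε) (x + ε) ∧ sigmaUpper α ζ = ⊤}.Nonempty := by
    have h0 : Cardinal.mk {α : ℝ | α ∈ Set.Ioo (x - ε) (x + ε) ∧ sigmaUpper α ζ = ⊤} ≠ 0 := by
      rw [hmk]; exact Cardinal.continuum_ne_zero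
    rwa [Cardinal.mk_ne_zero_iff, Set.nonempty_coe_sort] at h0
  obtain ⟨α, hα1, hα2⟩ := hne
  exact ⟨α, hball (by rwa [Real.ball_eq_Ioo]), hα2⟩
end
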